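/- arXiv:1904.07587 — 4 statements merged into one kernel-verified Lean document; each statement's English description precedes it below -/
import Mathlib

section
/- Let $A$, $B$ be polynomial rings over a field $k$ in disjoint variables, $R = A \otimes_k B$, $I \subseteq A$ a nonzero proper homogeneous ideal, $x \in A$ a variable and $y \in B$ a variable, and $J \subseteq B$ a nonzero proper homogeneous ideal. Then every associated prime of $(I, x-y)$ in $R$ is an associated prime of $(IJ, x-y)$; that is, $\{(\mathfrak{p}, x-y) : \mathfrak{p} \in \operatorname{Ass}(I)\} \subseteq \operatorname{Ass}(IJ, x-y)$. -/
open MvPolynomial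

/-- An ideal of a polynomial ring is homogeneous if it contains all homogeneous
components of each of its elements. -/
def IsHomogIdeal {k : Type*} [Field k] {σ : Type*} (I : Ideal (MvPolynomial σ k)) : Prop :=
  ∀ p ∈ I, ∀ i : ℕ, MvPolynomial.homogeneousComponent i p ∈ I

/-- The depth of a module `M` with respect to an ideal `𝔪`: the supremum of the lengths of
`M`-regular sequences consisting of elements of `𝔪`. -/
noncomputable def idealDepth {R : Type*} [CommRing R] (𝔪 : Ideal R)
    (M : Type*) [AddCommGroup M] [Module R M] : ℕ :=
  sSup {n : ℕ | ∃ rs : List R, rs.length = n ∧ (∀ r ∈ rs, r ∈ 𝔪) ∧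
    RingTheory.Sequence.IsRegular M rs}

/-- The depth of `S/Q` for an ideal `Q` of a polynomial ring `S`, with respect to the
maximal homogeneous ideal of `S`. -/
noncomputable def polyDepth {k : Type*} [Field k] {σ : Type*}
    (Q : Ideal (MvPolynomial σ k)) : ℕ :=
  idealDepth (Ideal.span (Set.range (MvPolynomial.X : σ → MvPolynomial σ k)))
    (MvPolynomial σ k ⧸ Q)

/-- Extension of an ideal of `k[x_1,...,x_r]` to `k[x_1,...,x_r,y_1,...,y_s]`. -/
noncomputable def extA {k : Type*} [Field k] {r s : ℕ}
    (I : Ideal (MvPolynomial (Fin r) k)) : Ideal (MvPolynomial (Fin r ⊕ Fin s) k) :=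
  I.map (rename (Sum.inl (β := Fin s)) : MvPolynomial (Fin r) k →ₐ[k] MvPolynomial (Fin r ⊕ Fin s) k)

/-- Extension of an ideal of `k[y_1,...,y_s]` to `k[x_1,...,x_r,y_1,...,y_s]`. -/
noncomputable def extB {k : Type*} [Field k] {r s : ℕ}
    (J : Ideal (MvPolynomial (Fin s) k)) : Ideal (MvPolynomial (Fin r ⊕ Fin s) k) :=
  J.map (rename (Sum.inr (α := Fin r)) : MvPolynomial (Fin s) k →ₐ[k] MvPolynomial (Fin r ⊕ Fin s) k)

noncomputable section Stmt8Aux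

open Finset

namespace Stmt8Aux

variable {k : Type*} [Field k]

/-! ### Part 1 : associated primes of homogeneous ideals are homogeneous -/

section Homog

variable {σ : Type*}

private lemma hc_mul (p q : MvPolynomial σ k) (n : ℕ) :
    homogeneousComponent n (p * q) =
      ∑ d ∈ range (p.totalDegree + 1), ∑ e ∈ range (q.totalDegree + 1),
        (if n = d + e then homogeneousComponent d p * homogeneousComponent e q else 0) := by
  conv_lhs => rw [← sum_homogeneousComponent p, ← sum_homogeneousComponent q]
  rw [Finset.sum_mul_sum, map_sum]
  refine Finset.sum_congr rfl fun d _ => ?_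
  rw [map_sum]
  refine Finset.sum_congr rfl fun e _ => ?_
  exact homogeneousComponent_of_mem (by
    rw [mem_homogeneousSubmodule]
    exact (homogeneousComponent_isHomogeneous d p).mul (homogeneousComponent_isHomogeneous e q))

private lemma hc_homog_mul (p : MvPolynomial σ k) {w : MvPolynomial σ k} {D : ℕ}
    (hw : w.IsHomogeneous D) (m : ℕ) :
    homogeneousComponent m (w * p) =
      ∑ e ∈ range (p.totalDegree + 1), (if m = D + e then w * homogeneousComponent e p else 0) := by
  conv_lhs => rw [← sum_homogeneousComponent p]
  rw [Finset.mul_sum, map_sum]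
  refine Finset.sum_congr rfl fun e _ => ?_
  exact homogeneousComponent_of_mem (by
    rw [mem_homogeneousSubmodule]
    exact hw.mul (homogeneousComponent_isHomogeneous e p))

open Classical in
private def badSet (I : Ideal (MvPolynomial σ k)) (a : MvPolynomial σ k) : Finset ℕ :=
  (range (a.totalDegree + 1)).filter fun e => homogeneousComponent e a ∉ I

private lemma mem_badSet {I : Ideal (MvPolynomial σ k)} {a : MvPolynomial σ k} {e : ℕ} :
    e ∈ badSet I a ↔ e ∈ range (a.totalDegree + 1) ∧ homogeneousComponent e a ∉ I := by
  simp [badSet]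

private lemma mem_of_badSet_eq_empty {I : Ideal (MvPolynomial σ k)} {a : MvPolynomial σ k}
    (h : badSet I a = ∅) : a ∈ I := by
  rw [← sum_homogeneousComponent a]
  refine Ideal.sum_mem _ fun e he => ?_
  by_contra hne
  have : e ∈ badSet I a := mem_badSet.2 ⟨he, hne⟩
  simp [h] at this

private lemma top_mul_max_mem {I : Ideal (MvPolynomial σ k)} (hIh : IsHomogIdeal I)
    {a f : MvPolynomial σ k} (hfa : f * a ∈ I) (hbs : (badSet I a).Nonempty) :
    homogeneousComponent f.totalDegree f * homogeneousComponent ((badSet I a).max' hbs) a ∈ I := by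
  classical
  set D := f.totalDegree with hD
  set E := (badSet I a).max' hbs with hE
  have hEbad : E ∈ badSet I a := Finset.max'_mem _ _
  have hErange : E ∈ range (a.totalDegree + 1) := (mem_badSet.1 hEbad).1
  have hsum : homogeneousComponent (D + E) (f * a) ∈ I := hIh _ hfa _
  rw [hc_mul, ← Finset.sum_product'] at hsum
  set T := (range (D + 1)) ×ˢ (range (a.totalDegree + 1)) with hT
  set F : ℕ × ℕ → MvPolynomial σ k := fun x =>
    if D + E = x.1 + x.2 then homogeneousComponent x.1 f * homogeneousComponent x.2 a else 0
    with hF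
  have hDE : (D, E) ∈ T := Finset.mem_product.2 ⟨Finset.self_mem_range_succ D, hErange⟩
  have herase : ∑ x ∈ T.erase (D, E), F x ∈ I := by
    refine Ideal.sum_mem _ fun x hx => ?_
    obtain ⟨hxne, hxT⟩ := Finset.mem_erase.1 hx
    obtain ⟨hd, he⟩ := Finset.mem_product.1 hxT
    show (if D + E = x.1 + x.2 then homogeneousComponent x.1 f * homogeneousComponent x.2 a
      else 0) ∈ I
    split_ifs with hcase
    · have hae : homogeneousComponent x.2 a ∈ I := by
        by_contra hne
        have hxbad : x.2 ∈ badSet I a := mem_badSet.2 ⟨he, hne⟩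
        have h1 : x.2 ≤ E := Finset.le_max' _ _ hxbad
        have h2 : x.1 ≤ D := Nat.lt_succ_iff.1 (Finset.mem_range.1 hd)
        have hx1 : x.1 = D := by omega
        have hx2 : x.2 = E := by omega
        exact hxne (Prod.ext hx1 hx2)
      exact I.mul_mem_left _ hae
    · exact I.zero_mem
  have hFDE : F (D, E) = (∑ x ∈ T, F x) - ∑ x ∈ T.erase (D, E), F x := by
    rw [← Finset.add_sum_erase _ F hDE]
    ring
  have : F (D, E) ∈ I := by
    rw [hFDE]
    exact Ideal.sub_mem _ hsum herase
  simpa [hF] using this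

private lemma badSet_card_lt {I : Ideal (MvPolynomial σ k)} (hIh : IsHomogIdeal I)
    {a f : MvPolynomial σ k} (hfa : f * a ∈ I) (hbs : (badSet I a).Nonempty) :
    (badSet I (homogeneousComponent f.totalDegree f * a)).card < (badSet I a).card := by
  classical
  set D := f.totalDegree with hD
  set w := homogeneousComponent D f with hwdef
  set E := (badSet I a).max' hbs with hE
  have hcomp : ∀ m, homogeneousComponent m (w * a)
      = ∑ e ∈ range (a.totalDegree + 1), (if m = D + e then w * homogeneousComponent e a else 0) :=
    hc_homog_mul a (homogeneousComponent_isHomogeneous D f)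
  have hshape : ∀ m ∈ badSet I (w * a), m - D ∈ (badSet I a).erase E ∧ m = D + (m - D) := by
    intro m hm
    have hm' : homogeneousComponent m (w * a) ∉ I := (mem_badSet.1 hm).2
    have hex : ∃ e ∈ range (a.totalDegree + 1),
        (if m = D + e then w * homogeneousComponent e a else 0) ∉ I := by
      by_contra hall
      push_neg at hall
      exact hm' (hcomp m ▸ Ideal.sum_mem _ hall)
    obtain ⟨e, herange, hterm⟩ := hex
    have hmeq : m = D + e := by
      by_contra hne; rw [if_neg hne] at hterm; exact hterm I.zero_mem
    rw [if_pos hmeq] at hterm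
    have hea : homogeneousComponent e a ∉ I := fun h => hterm (I.mul_mem_left _ h)
    have hebad : e ∈ badSet I a := mem_badSet.2 ⟨herange, hea⟩
    have heE : e ≠ E := by
      rintro rfl
      exact hterm (top_mul_max_mem hIh hfa hbs)
    have hme : m - D = e := by omega
    rw [hme]
    exact ⟨Finset.mem_erase.2 ⟨heE, hebad⟩, hmeq⟩
  have hcardle : (badSet I (w * a)).card ≤ ((badSet I a).erase E).card := by
    refine Finset.card_le_card_of_injOn (fun m => m - D) (fun m hm => (hshape m hm).1) ?_
    intro m1 h1 m2 h2 heq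
    have e1 := (hshape m1 h1).2
    have e2 := (hshape m2 h2).2
    simp only at heq
    omega
  have hElt : ((badSet I a).erase E).card < (badSet I a).card :=
    Finset.card_erase_lt_of_mem (Finset.max'_mem _ _)
  omega

private lemma isHomog_of_colon {I 𝔭 : Ideal (MvPolynomial σ k)}
    (hIh : IsHomogIdeal I) (h𝔭 : 𝔭.IsPrime)
    (hex : ∃ a, ∀ f, f ∈ 𝔭 ↔ f * a ∈ I) : IsHomogIdeal 𝔭 := by
  classical
  suffices H : ∀ (t : ℕ) (a : MvPolynomial σ k), (∀ f, f ∈ 𝔭 ↔ f * a ∈ I) →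
      (badSet I a).card ≤ t → ∀ f ∈ 𝔭, ∀ n, homogeneousComponent n f ∈ 𝔭 by
    obtain ⟨a, ha⟩ := hex
    exact fun p hp n => H (badSet I a).card a ha le_rfl p hp n
  intro t
  induction t with
  | zero =>
    intro a ha hcard
    exfalso
    have hae : a ∈ I := mem_of_badSet_eq_empty (Finset.card_eq_zero.1 (Nat.le_zero.1 hcard))
    exact h𝔭.ne_top ((Ideal.eq_top_iff_one _).2 ((ha 1).2 (by simpa using hae)))
  | succ t ih =>
    intro a ha hcard
    have haI : a ∉ I := fun h =>
      h𝔭.ne_top ((Ideal.eq_top_iff_one _).2 ((ha 1).2 (by simpa using h)))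
    have hbs : (badSet I a).Nonempty := by
      rw [Finset.nonempty_iff_ne_empty]
      exact fun h => haI (mem_of_badSet_eq_empty h)
    suffices Hin : ∀ (N : ℕ) (f : MvPolynomial σ k), f ∈ 𝔭 → f.totalDegree ≤ N →
        ∀ n, homogeneousComponent n f ∈ 𝔭 by
      exact fun f hf n => Hin f.totalDegree f hf le_rfl n
    intro N
    induction N with
    | zero =>
      intro f hf hdeg n
      rcases Nat.eq_zero_or_pos n with hn | hn
      · subst hn
        have h0 : f = homogeneousComponent 0 f := by
          conv_lhs => rw [← sum_homogeneousComponent f]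
          rw [Nat.le_zero.1 hdeg]
          simp
        rw [← h0]; exact hf
      · rw [homogeneousComponent_eq_zero _ _ (lt_of_le_of_lt hdeg hn)]
        exact zero_mem _
    | succ N ihN =>
      intro f hf hdeg n
      by_cases hN : f.totalDegree ≤ N
      · exact ihN f hf hN n
      have hD : f.totalDegree = N + 1 := le_antisymm hdeg (not_le.1 hN)
      have hfD : homogeneousComponent f.totalDegree f ∈ 𝔭 := by
        by_cases hmem : homogeneousComponent f.totalDegree f ∈ 𝔭
        · exact hmem
        set w := homogeneousComponent f.totalDegree f with hw
        have ha' : ∀ g, g ∈ 𝔭 ↔ g * (w * a) ∈ I := by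
          intro g
          constructor
          · intro hg
            have h1 : g * a ∈ I := (ha g).1 hg
            have h2 := I.mul_mem_left w h1
            rwa [show w * (g * a) = g * (w * a) by ring] at h2
          · intro hg
            have h1 : (g * w) * a ∈ I := by rwa [show (g * w) * a = g * (w * a) by ring]
            have h2 := (ha (g * w)).2 h1
            exact (h𝔭.mem_or_mem h2).resolve_right hmem
        have hlt := badSet_card_lt hIh ((ha f).1 hf) hbs
        rw [← hw] at hlt
        exact ih (w * a) ha' (by omega) f hf f.totalDegree
      have hsub : f - homogeneousComponent f.totalDegree f ∈ 𝔭 := 𝔭.sub_mem hf hfD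
      have hdeg' : (f - homogeneousComponent f.totalDegree f).totalDegree ≤ N := by
        have hrepr : f = (∑ d ∈ range f.totalDegree, homogeneousComponent d f)
            + homogeneousComponent f.totalDegree f := by
          conv_lhs => rw [← sum_homogeneousComponent f]
          rw [Finset.sum_range_succ]
        have hrepr2 : f - homogeneousComponent f.totalDegree f
            = ∑ d ∈ range f.totalDegree, homogeneousComponent d f := by
          nth_rewrite 1 [hrepr]
          ring
        rw [hrepr2]
        refine le_trans (totalDegree_finset_sum _ _) ?_
        refine Finset.sup_le fun d hd => ?_
        have hdlt : d < f.totalDegree := Finset.mem_range.1 hd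
        exact le_trans (homogeneousComponent_isHomogeneous d f).totalDegree_le (by omega)
      have h1 := ihN _ hsub hdeg' n
      have h2 : homogeneousComponent n (homogeneousComponent f.totalDegree f) ∈ 𝔭 := by
        rw [homogeneousComponent_of_mem (by
          rw [mem_homogeneousSubmodule]; exact homogeneousComponent_isHomogeneous _ f)]
        split
        · exact hfD
        · exact zero_mem _
      have h3 : homogeneousComponent n f
          = homogeneousComponent n (f - homogeneousComponent f.totalDegree f)
            + homogeneousComponent n (homogeneousComponent f.totalDegree f) := by
        rw [map_sub]; ring
      rw [h3]; exact add_mem h1 h2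

end Homog

/-! ### Part 2 : the substitution homomorphisms -/

variable {r s : ℕ}

private def sigSub (i : Fin r) (j : Fin s) :
    MvPolynomial (Fin r ⊕ Fin s) k →ₐ[k] MvPolynomial (Fin r ⊕ Fin s) k :=
  aeval (Sum.elim (fun m => X (Sum.inl m))
    (fun t => if t = j then X (Sum.inl i) else X (Sum.inr t)))

private def iotaSub (i : Fin r) (j : Fin s) :
    MvPolynomial (Fin s) k →ₐ[k] MvPolynomial (Fin r ⊕ Fin s) k :=
  aeval (fun t => if t = j then X (Sum.inl i) else X (Sum.inr t))

private def phiE :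
    MvPolynomial (Fin r ⊕ Fin s) k ≃ₐ[k] MvPolynomial (Fin s) (MvPolynomial (Fin r) k) :=
  (renameEquiv k (Equiv.sumComm (Fin r) (Fin s))).trans (sumAlgEquiv k (Fin s) (Fin r))

@[simp] private lemma sigSub_X_inl (i : Fin r) (j : Fin s) (m : Fin r) :
    sigSub (k := k) i j (X (Sum.inl m)) = X (Sum.inl m) := by simp [sigSub]

@[simp] private lemma sigSub_X_inr (i : Fin r) (j : Fin s) (t : Fin s) :
    sigSub (k := k) i j (X (Sum.inr t)) = if t = j then X (Sum.inl i) else X (Sum.inr t) := by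
  simp [sigSub]

@[simp] private lemma iotaSub_X (i : Fin r) (j : Fin s) (t : Fin s) :
    iotaSub (k := k) i j (X t) = if t = j then X (Sum.inl i) else X (Sum.inr t) := by
  simp [iotaSub]

@[simp] private lemma phiE_X_inl (m : Fin r) :
    phiE (k := k) (r := r) (s := s) (X (Sum.inl m)) = C (X m) := by
  simp [phiE]

@[simp] private lemma phiE_X_inr (t : Fin s) :
    phiE (k := k) (r := r) (s := s) (X (Sum.inr t)) = X t := by
  simp [phiE]

@[simp] private lemma phiE_C (c : k) :
    phiE (k := k) (r := r) (s := s) (C c) = C (C c) := by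
  simp [phiE]

private lemma sig_comp_renameInl (i : Fin r) (j : Fin s) :
    (sigSub (k := k) i j).comp
        (rename (Sum.inl (β := Fin s)) : MvPolynomial (Fin r) k →ₐ[k] _)
      = rename (Sum.inl (β := Fin s)) :=
  algHom_ext fun m => by simp

private lemma sig_comp_iota (i : Fin r) (j : Fin s) :
    (sigSub (k := k) i j).comp (iotaSub i j) = iotaSub i j :=
  algHom_ext fun t => by by_cases ht : t = j <;> simp [ht]

private lemma sig_comp_renameInr (i : Fin r) (j : Fin s) :
    (sigSub (k := k) i j).comp
        (rename (Sum.inr (α := Fin r)) : MvPolynomial (Fin s) k →ₐ[k] _)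
      = iotaSub i j :=
  algHom_ext fun t => by simp

private lemma sig_xi (i : Fin r) (j : Fin s) :
    sigSub (k := k) i j (X (Sum.inl i) - X (Sum.inr j)) = 0 := by
  simp

private lemma sub_sig_mem (i : Fin r) (j : Fin s) (h : MvPolynomial (Fin r ⊕ Fin s) k) :
    h - sigSub i j h ∈
      Ideal.span {(X (Sum.inl i) - X (Sum.inr j) : MvPolynomial (Fin r ⊕ Fin s) k)} := by
  have hX : ∀ n, (X n : MvPolynomial (Fin r ⊕ Fin s) k) - sigSub i j (X n) ∈
      Ideal.span {(X (Sum.inl i) - X (Sum.inr j) : MvPolynomial (Fin r ⊕ Fin s) k)} := by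
    rintro (m | t)
    · simpa using zero_mem _
    · by_cases ht : t = j
      · have heq : (X (Sum.inr t) : MvPolynomial (Fin r ⊕ Fin s) k) - sigSub i j (X (Sum.inr t))
            = -(X (Sum.inl i) - X (Sum.inr j)) := by
          rw [sigSub_X_inr, if_pos ht, ht]; ring
        rw [heq]
        exact neg_mem (Ideal.subset_span rfl)
      · simpa [ht] using zero_mem _
  induction h using MvPolynomial.induction_on with
  | C a => simpa using zero_mem _
  | add p q hp hq => simpa [add_sub_add_comm] using add_mem hp hq
  | mul_X p n hp =>
    have heq : p * X n - sigSub i j (p * X n)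
        = (p - sigSub i j p) * X n + sigSub i j p * (X n - sigSub i j (X n)) := by
      rw [map_mul]; ring
    rw [heq]
    exact add_mem (Ideal.mul_mem_right _ _ hp) (Ideal.mul_mem_left _ _ (hX n))

private lemma mem_sup_xi_iff (i : Fin r) (j : Fin s)
    {L : Ideal (MvPolynomial (Fin r ⊕ Fin s) k)} (hL : L.map (sigSub i j) ≤ L)
    (h : MvPolynomial (Fin r ⊕ Fin s) k) :
    h ∈ L ⊔ Ideal.span {(X (Sum.inl i) - X (Sum.inr j) : MvPolynomial (Fin r ⊕ Fin s) k)}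
      ↔ sigSub i j h ∈ L := by
  constructor
  · intro hh
    obtain ⟨u, hu, v, hv, rfl⟩ := Submodule.mem_sup.1 hh
    obtain ⟨w, hw⟩ := Ideal.mem_span_singleton'.1 hv
    have h2 : sigSub i j v = 0 := by rw [← hw, map_mul, sig_xi, mul_zero]
    rw [map_add, h2, add_zero]
    exact hL (Ideal.mem_map_of_mem _ hu)
  · intro hσ
    have h1 := sub_sig_mem i j h
    have heq : sigSub i j h + (h - sigSub i j h) = h := by ring
    rw [← heq]
    exact Submodule.add_mem_sup hσ h1

/-! ### Ideal-map lemmas -/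

private lemma ideal_map_algHom {A B : Type*} [CommRing A] [CommRing B] [Algebra k A]
    [Algebra k B] (f : A →ₐ[k] B) (I : Ideal A) : I.map f = I.map f.toRingHom := rfl

private lemma ideal_map_comp {A B C : Type*} [CommRing A] [CommRing B] [CommRing C]
    [Algebra k A] [Algebra k B] [Algebra k C] (f : A →ₐ[k] B) (g : B →ₐ[k] C) (I : Ideal A) :
    (I.map f).map g = I.map (g.comp f) := by
  rw [ideal_map_algHom f, ideal_map_algHom g, ideal_map_algHom (g.comp f), Ideal.map_map]
  rfl

private lemma map_sig_extA (i : Fin r) (j : Fin s) (M : Ideal (MvPolynomial (Fin r) k)) :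
    (extA (s := s) M).map (sigSub i j) = extA M := by
  rw [extA, ideal_map_comp, sig_comp_renameInl]

private def Jt (i : Fin r) (j : Fin s) (J : Ideal (MvPolynomial (Fin s) k)) :
    Ideal (MvPolynomial (Fin r ⊕ Fin s) k) :=
  J.map (iotaSub (k := k) i j)

private lemma map_sig_Jt (i : Fin r) (j : Fin s) (J : Ideal (MvPolynomial (Fin s) k)) :
    (Jt (k := k) i j J).map (sigSub i j) = Jt i j J := by
  rw [Jt, ideal_map_comp, sig_comp_iota]

/-! ### Transport through `phiE` -/

private lemma phiE_comp_renameInl :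
    ((phiE (k := k) (r := r) (s := s)).toAlgHom.toRingHom).comp
        ((rename (Sum.inl (β := Fin s)) : MvPolynomial (Fin r) k →ₐ[k] _).toRingHom)
      = (C : MvPolynomial (Fin r) k →+* MvPolynomial (Fin s) (MvPolynomial (Fin r) k)) := by
  apply MvPolynomial.ringHom_ext
  · intro c; simp
  · intro m; simp

private lemma phiE_renameInl (p : MvPolynomial (Fin r) k) :
    phiE (k := k) (r := r) (s := s) (rename Sum.inl p) = C p := by
  have h := DFunLike.congr_fun (phiE_comp_renameInl (k := k) (r := r) (s := s)) p
  simpa using h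

private lemma mem_extA_iff {M : Ideal (MvPolynomial (Fin r) k)}
    {h : MvPolynomial (Fin r ⊕ Fin s) k} :
    h ∈ extA (s := s) M ↔ ∀ m, coeff m (phiE (k := k) h) ∈ M := by
  have hmap : (extA (s := s) M).map ((phiE (k := k) (r := r) (s := s)).toAlgHom.toRingHom)
      = M.map (C : MvPolynomial (Fin r) k →+* _) := by
    rw [extA, ideal_map_algHom, Ideal.map_map, phiE_comp_renameInl]
  constructor
  · intro hh
    have h1 : phiE (k := k) h ∈ M.map (C : MvPolynomial (Fin r) k →+* _) := by
      rw [← hmap]; exact Ideal.mem_map_of_mem _ hh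
    rw [MvPolynomial.mem_map_C_iff] at h1
    exact h1
  · intro hcf
    have h1 : phiE (k := k) h ∈ (extA (s := s) M).map
        ((phiE (k := k) (r := r) (s := s)).toAlgHom.toRingHom) := by
      rw [hmap, MvPolynomial.mem_map_C_iff]; exact hcf
    have h2 := Ideal.comap_map_of_bijective
      ((phiE (k := k) (r := r) (s := s)).toAlgHom.toRingHom)
      (phiE (k := k) (r := r) (s := s)).bijective (I := extA (s := s) M)
    rw [← h2]
    exact Ideal.mem_comap.2 h1

private lemma extA_isPrime (M : Ideal (MvPolynomial (Fin r) k)) (hM : M.IsPrime) :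
    (extA (s := s) M).IsPrime := by
  haveI := hM
  have hker : extA (s := s) M = RingHom.ker ((MvPolynomial.map (Ideal.Quotient.mk M)).comp
      ((phiE (k := k) (r := r) (s := s)).toAlgHom.toRingHom)) := by
    ext h
    rw [RingHom.mem_ker, RingHom.comp_apply, mem_extA_iff]
    constructor
    · intro hh
      ext m
      simp [coeff_map, Ideal.Quotient.eq_zero_iff_mem.2 (hh m)]
    · intro hh m
      have := congrArg (coeff m) hh
      simpa [coeff_map, Ideal.Quotient.eq_zero_iff_mem] using this
  rw [hker]
  exact RingHom.ker_isPrime _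

private lemma hcolon1 {I 𝔭 : Ideal (MvPolynomial (Fin r) k)} {a : MvPolynomial (Fin r) k}
    (hiff : ∀ f, f ∈ 𝔭 ↔ f * a ∈ I) {h : MvPolynomial (Fin r ⊕ Fin s) k}
    (hmem : h * rename Sum.inl a ∈ extA (s := s) I) : h ∈ extA (s := s) 𝔭 := by
  rw [mem_extA_iff] at hmem ⊢
  intro m
  have h1 := hmem m
  rw [map_mul, phiE_renameInl, mul_comm, coeff_C_mul] at h1
  exact (hiff _).2 (by rwa [mul_comm] at h1)

private lemma hcolon2 {I 𝔭 : Ideal (MvPolynomial (Fin r) k)} {a : MvPolynomial (Fin r) k}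
    (hiff : ∀ f, f ∈ 𝔭 ↔ f * a ∈ I) {h : MvPolynomial (Fin r ⊕ Fin s) k}
    (hmem : h ∈ extA (s := s) 𝔭) : h * rename Sum.inl a ∈ extA (s := s) I := by
  rw [mem_extA_iff] at hmem ⊢
  intro m
  rw [map_mul, phiE_renameInl, mul_comm, coeff_C_mul, mul_comm]
  exact (hiff _).1 (hmem m)

/-! ### The two non-membership lemmas -/

private def zeta (j : Fin s) : MvPolynomial (Fin s) k →ₐ[k] MvPolynomial (Fin s) k :=
  aeval fun t => if t = j then 0 else X t

@[simp] private lemma zeta_X (j t : Fin s) :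
    zeta (k := k) j (X t) = if t = j then 0 else X t := by simp [zeta]

private lemma sub_zeta_mem (j : Fin s) (b : MvPolynomial (Fin s) k) :
    b - zeta (k := k) j b ∈ Ideal.span {(X j : MvPolynomial (Fin s) k)} := by
  have hX : ∀ t, (X t : MvPolynomial (Fin s) k) - zeta (k := k) j (X t) ∈
      Ideal.span {(X j : MvPolynomial (Fin s) k)} := by
    intro t
    by_cases ht : t = j
    · rw [zeta_X, if_pos ht, sub_zero, ht]
      exact Ideal.subset_span rfl
    · simpa [ht] using zero_mem _
  induction b using MvPolynomial.induction_on with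
  | C c => simpa using zero_mem _
  | add p q hp hq => simpa [add_sub_add_comm] using add_mem hp hq
  | mul_X p t hp =>
    have heq : p * X t - zeta (k := k) j (p * X t)
        = (p - zeta j p) * X t + zeta j p * (X t - zeta j (X t)) := by
      rw [map_mul]; ring
    rw [heq]
    exact add_mem (Ideal.mul_mem_right _ _ hp) (Ideal.mul_mem_left _ _ (hX t))

private lemma iota_not_mem_case2 {𝔭 : Ideal (MvPolynomial (Fin r) k)} (h𝔭 : 𝔭.IsPrime)
    (i : Fin r) (j : Fin s) (hxi : X i ∈ 𝔭) {b₀ : MvPolynomial (Fin s) k}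
    (hb : b₀ ∉ Ideal.span {(X j : MvPolynomial (Fin s) k)}) :
    iotaSub (k := k) i j b₀ ∉ extA (s := s) 𝔭 := by
  intro hmem
  rw [mem_extA_iff] at hmem
  haveI : Nontrivial (MvPolynomial (Fin r) k ⧸ 𝔭) := Ideal.Quotient.nontrivial_iff.mpr h𝔭.ne_top
  have hΘ : ((MvPolynomial.map (Ideal.Quotient.mk 𝔭)).comp
        (((phiE (k := k) (r := r) (s := s)).toAlgHom.toRingHom).comp
          (iotaSub (k := k) i j).toRingHom))
      = (MvPolynomial.map (algebraMap k (MvPolynomial (Fin r) k ⧸ 𝔭))).comp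
          (zeta (k := k) j).toRingHom := by
    apply MvPolynomial.ringHom_ext
    · intro c
      simp only [RingHom.comp_apply, AlgHom.coe_toRingHom]
      simp
      rw [← MvPolynomial.algebraMap_eq, Ideal.Quotient.mk_algebraMap]
    · intro t
      by_cases ht : t = j
      · subst ht
        simp [Ideal.Quotient.eq_zero_iff_mem.2 hxi]
      · simp [ht]
  have happ := DFunLike.congr_fun hΘ b₀
  simp only [RingHom.comp_apply, AlgHom.coe_toRingHom, AlgEquiv.toAlgHom_eq_coe] at happ
  have hz : MvPolynomial.map (algebraMap k (MvPolynomial (Fin r) k ⧸ 𝔭))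
      (zeta (k := k) j b₀) = 0 := by
    show MvPolynomial.map (algebraMap k (MvPolynomial (Fin r) k ⧸ 𝔭))
      ((zeta (k := k) j).toRingHom b₀) = 0
    rw [← happ]
    ext m
    simp [coeff_map, Ideal.Quotient.eq_zero_iff_mem.2 (hmem m)]
  have hzb : zeta (k := k) j b₀ = 0 :=
    MvPolynomial.map_injective _ (algebraMap k (MvPolynomial (Fin r) k ⧸ 𝔭)).injective
      (by rw [hz, map_zero])
  refine hb ?_
  have h1 := sub_zeta_mem (k := k) j b₀
  rwa [hzb, sub_zero] at h1

private lemma iota_not_mem_case1 {𝔭 : Ideal (MvPolynomial (Fin r) k)} (h𝔭 : 𝔭.IsPrime)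
    (hhom : IsHomogIdeal 𝔭) (i : Fin r) (j : Fin s) (hxi : X i ∉ 𝔭)
    {b₀ : MvPolynomial (Fin s) k} (hb : b₀ ≠ 0) :
    iotaSub (k := k) i j b₀ ∉ extA (s := s) 𝔭 := by
  intro hmem
  rw [mem_extA_iff] at hmem
  haveI : Nontrivial (MvPolynomial (Fin r) k ⧸ 𝔭) := Ideal.Quotient.nontrivial_iff.mpr h𝔭.ne_top
  set e' : Polynomial k →ₐ[k] (MvPolynomial (Fin r) k ⧸ 𝔭) :=
    Polynomial.aeval (Ideal.Quotient.mk 𝔭 (X i)) with he'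
  set χ₀ : MvPolynomial (Fin s) k →ₐ[k] MvPolynomial (Fin s) (Polynomial k) :=
    aeval (fun t => if t = j then C Polynomial.X else X t) with hχ₀
  have he'inj : Function.Injective e' := by
    rw [injective_iff_map_eq_zero]
    intro p hp
    have hval : Ideal.Quotient.mk 𝔭 (Polynomial.aeval (X i : MvPolynomial (Fin r) k) p) = 0 := by
      have h1 := Polynomial.aeval_algHom_apply (Ideal.Quotient.mkₐ k 𝔭)
        (X i : MvPolynomial (Fin r) k) p
      simp only [Ideal.Quotient.mkₐ_eq_mk] at h1
      rw [← h1]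
      exact hp
    have hu𝔭 : Polynomial.aeval (X i : MvPolynomial (Fin r) k) p ∈ 𝔭 :=
      Ideal.Quotient.eq_zero_iff_mem.1 hval
    have hu : Polynomial.aeval (X i : MvPolynomial (Fin r) k) p
        = ∑ d ∈ range (p.natDegree + 1), C (p.coeff d) * (X i : MvPolynomial (Fin r) k) ^ d := by
      rw [Polynomial.aeval_eq_sum_range]
      exact Finset.sum_congr rfl fun d _ => smul_eq_C_mul _ _
    have hcoeff : ∀ d, d ∈ range (p.natDegree + 1) → p.coeff d = 0 := by
      intro d hd
      have hcomp : homogeneousComponent d (Polynomial.aeval (X i : MvPolynomial (Fin r) k) p)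
          = C (p.coeff d) * X i ^ d := by
        rw [hu, map_sum]
        rw [Finset.sum_congr rfl fun e _ => homogeneousComponent_of_mem (p := C (p.coeff e) *
            (X i : MvPolynomial (Fin r) k) ^ e) (by
          rw [mem_homogeneousSubmodule]; exact isHomogeneous_C_mul_X_pow _ _ _)]
        rw [Finset.sum_ite_eq _ d fun e => C (p.coeff e) * (X i : MvPolynomial (Fin r) k) ^ e]
        rw [if_pos hd]
      have hmem𝔭 : C (p.coeff d) * (X i : MvPolynomial (Fin r) k) ^ d ∈ 𝔭 := by
        rw [← hcomp]; exact hhom _ hu𝔭 d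
      by_contra hne
      have h1 : (X i : MvPolynomial (Fin r) k) ^ d ∈ 𝔭 := by
        have h2 := 𝔭.mul_mem_left (C (p.coeff d)⁻¹) hmem𝔭
        rwa [← mul_assoc, ← C_mul, inv_mul_cancel₀ hne, C_1, one_mul] at h2
      rcases Nat.eq_zero_or_pos d with hd0 | hd0
      · rw [hd0, pow_zero] at h1
        exact h𝔭.ne_top ((Ideal.eq_top_iff_one _).2 h1)
      · exact hxi (h𝔭.mem_of_pow_mem _ h1)
    refine Polynomial.ext fun d => ?_
    rw [Polynomial.coeff_zero]
    by_cases hd : d ∈ range (p.natDegree + 1)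
    · exact hcoeff d hd
    · exact Polynomial.coeff_eq_zero_of_natDegree_lt (by
        simpa [Nat.lt_succ_iff, not_le] using hd)
  have hχinj : Function.Injective χ₀ := by
    set ρ : MvPolynomial (Fin s) (Polynomial k) →+* MvPolynomial (Fin s) k :=
      eval₂Hom (Polynomial.eval₂RingHom (C : k →+* MvPolynomial (Fin s) k) (X j)) X with hρ
    have hcomp : ρ.comp χ₀.toRingHom = RingHom.id _ := by
      apply MvPolynomial.ringHom_ext
      · intro c; simp [hρ, hχ₀]
      · intro t; by_cases ht : t = j <;> simp [hρ, hχ₀, ht]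
    have hli : ∀ b, ρ (χ₀ b) = b := fun b => by
      have := DFunLike.congr_fun hcomp b
      simpa using this
    exact Function.LeftInverse.injective hli
  have hΘ : ((MvPolynomial.map (Ideal.Quotient.mk 𝔭)).comp
        (((phiE (k := k) (r := r) (s := s)).toAlgHom.toRingHom).comp
          (iotaSub (k := k) i j).toRingHom))
      = (MvPolynomial.map e'.toRingHom).comp χ₀.toRingHom := by
    apply MvPolynomial.ringHom_ext
    · intro c
      simp only [RingHom.comp_apply, AlgHom.coe_toRingHom]
      simp [hχ₀, he']
      rw [← MvPolynomial.algebraMap_eq, Ideal.Quotient.mk_algebraMap]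
    · intro t
      by_cases ht : t = j
      · subst ht
        simp [hχ₀, he']
      · simp [hχ₀, he', ht]
  have happ := DFunLike.congr_fun hΘ b₀
  simp only [RingHom.comp_apply, AlgHom.coe_toRingHom, AlgEquiv.toAlgHom_eq_coe] at happ
  have h0 : MvPolynomial.map e'.toRingHom (χ₀ b₀) = 0 := by
    show MvPolynomial.map e'.toRingHom (χ₀.toRingHom b₀) = 0
    rw [← happ]
    ext m
    simp [coeff_map, Ideal.Quotient.eq_zero_iff_mem.2 (hmem m)]
  have hχ0 : χ₀ b₀ = 0 :=
    MvPolynomial.map_injective _ he'inj (by rw [h0, map_zero])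
  exact hb (hχinj (by rw [hχ0, map_zero]))

end Stmt8Aux

end Stmt8Aux

open Stmt8Aux in
theorem stmt8 {k : Type*} [Field k] {r s : ℕ}
    (I : Ideal (MvPolynomial (Fin r) k)) (J : Ideal (MvPolynomial (Fin s) k))
    (hI0 : I ≠ ⊥) (hI1 : I ≠ ⊤) (hIh : IsHomogIdeal I)
    (hJ0 : J ≠ ⊥) (hJ1 : J ≠ ⊤) (hJh : IsHomogIdeal J)
    (i : Fin r) (j : Fin s) :
    letI R := MvPolynomial (Fin r ⊕ Fin s) k
    letI ξ : R := X (Sum.inl i) - X (Sum.inr j)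
    {P | ∃ 𝔭 ∈ associatedPrimes (MvPolynomial (Fin r) k) (MvPolynomial (Fin r) k ⧸ I),
          P = extA (s := s) 𝔭 ⊔ Ideal.span {ξ}} ⊆
      associatedPrimes R (R ⧸ (extA (s := s) I * extB (r := r) J ⊔ Ideal.span {ξ})) := by
  classical
  intro P hP
  obtain ⟨𝔭, h𝔭, rfl⟩ := hP
  obtain ⟨h𝔭prime, x, hx⟩ := isAssociatedPrime_iff.1 h𝔭
  obtain ⟨a, rfl⟩ := Submodule.Quotient.mk_surjective _ x
  have hiff : ∀ f, f ∈ 𝔭 ↔ f * a ∈ I := fun f => by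
    rw [hx, Submodule.mem_colon_singleton, Submodule.mem_bot, ← Submodule.Quotient.mk_smul,
      Submodule.Quotient.mk_eq_zero, smul_eq_mul]
  have hhom𝔭 : IsHomogIdeal 𝔭 := isHomog_of_colon hIh h𝔭prime ⟨a, hiff⟩
  -- choose the exponent c and the element b₀
  obtain ⟨b₁, hb₁J, hb₁0⟩ := Submodule.exists_mem_ne_zero_of_ne_bot hJ0
  have hbound : ∀ c : ℕ, J ≤ Ideal.span {(X j : MvPolynomial (Fin s) k) ^ c} →
      c ≤ b₁.totalDegree := by
    intro c hc
    obtain ⟨u, hu⟩ := Ideal.mem_span_singleton.1 (hc hb₁J)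
    obtain ⟨m, hm⟩ := MvPolynomial.support_nonempty.2 hb₁0
    have hcoeff : coeff m b₁ ≠ 0 := MvPolynomial.mem_support_iff.1 hm
    have hXpow : (X j : MvPolynomial (Fin s) k) ^ c = monomial (Finsupp.single j c) 1 :=
      MvPolynomial.X_pow_eq_monomial
    have hb₁ : b₁ = u * monomial (Finsupp.single j c) 1 := by rw [← hXpow, mul_comm, ← hu]
    have hif : coeff m b₁ = if Finsupp.single j c ≤ m then coeff (m - Finsupp.single j c) u * 1
        else 0 := by
      rw [hb₁, MvPolynomial.coeff_mul_monomial']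
    have hle : Finsupp.single j c ≤ m := by
      by_contra hnle
      rw [if_neg hnle] at hif
      exact hcoeff hif
    have hcm : c ≤ m j := by
      have := hle j
      simpa using this
    have hmj : m j ≤ m.sum fun _ e => e := by
      rcases Nat.eq_zero_or_pos (m j) with h0 | h0
      · omega
      · have hjm : j ∈ m.support := Finsupp.mem_support_iff.2 (by omega)
        exact Finset.single_le_sum (fun _ _ => Nat.zero_le _) hjm
    have hms : (m.sum fun _ e => e) ≤ b₁.totalDegree := MvPolynomial.le_totalDegree hm
    omega
  set c := Nat.findGreatest
    (fun c => J ≤ Ideal.span {(X j : MvPolynomial (Fin s) k) ^ c}) b₁.totalDegree with hcdef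
  have hJc : J ≤ Ideal.span {(X j : MvPolynomial (Fin s) k) ^ c} :=
    Nat.findGreatest_spec
      (P := fun c => J ≤ Ideal.span {(X j : MvPolynomial (Fin s) k) ^ c}) (Nat.zero_le _) (by
      show J ≤ Ideal.span {(X j : MvPolynomial (Fin s) k) ^ 0}
      simp [Ideal.span_singleton_one])
  have hnext : ¬ J ≤ Ideal.span {(X j : MvPolynomial (Fin s) k) ^ (c + 1)} := fun hle =>
    Nat.findGreatest_is_greatest (Nat.lt_succ_self c) (hbound _ hle) hle
  obtain ⟨b', hb'J, hb'span⟩ := SetLike.not_le_iff_exists.1 hnext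
  obtain ⟨b₀, hb₀eq⟩ := Ideal.mem_span_singleton.1 (hJc hb'J)
  have hbJ : (X j : MvPolynomial (Fin s) k) ^ c * b₀ ∈ J := by rw [← hb₀eq]; exact hb'J
  have hb₀X : b₀ ∉ Ideal.span {(X j : MvPolynomial (Fin s) k)} := by
    intro hmem
    obtain ⟨v, hv⟩ := Ideal.mem_span_singleton.1 hmem
    exact hb'span (Ideal.mem_span_singleton.2 ⟨v, by rw [hb₀eq, hv]; ring⟩)
  have hb₀0 : b₀ ≠ 0 := by
    intro h0
    rw [h0, mul_zero] at hb₀eq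
    rw [hb₀eq] at hb'span
    exact hb'span (zero_mem _)
  have hb0ext : iotaSub i j b₀ ∉ extA (s := s) 𝔭 := by
    by_cases hxi : X i ∈ 𝔭
    · exact iota_not_mem_case2 h𝔭prime i j hxi hb₀X
    · exact iota_not_mem_case1 h𝔭prime hhom𝔭 i j hxi hb₀0
  -- notation
  set aR : MvPolynomial (Fin r ⊕ Fin s) k := rename Sum.inl a with haR
  set bt : MvPolynomial (Fin r ⊕ Fin s) k := iotaSub i j b₀ with hbt
  set xc : MvPolynomial (Fin r ⊕ Fin s) k := X (Sum.inl i) ^ c with hxc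
  set g : MvPolynomial (Fin r ⊕ Fin s) k := aR * (xc * bt) with hg
  have hKσ : (extA (s := s) I * Jt i j J).map (sigSub i j) ≤ extA (s := s) I * Jt i j J := by
    rw [Ideal.map_mul, map_sig_extA, map_sig_Jt]
  have hPσ : (extA (s := s) 𝔭).map (sigSub i j) ≤ extA (s := s) 𝔭 :=
    (map_sig_extA i j 𝔭).le
  -- the two presentations of Q
  have hBJt : extB (r := r) J ≤ Jt i j J ⊔
      Ideal.span {(X (Sum.inl i) - X (Sum.inr j) : MvPolynomial (Fin r ⊕ Fin s) k)} := by
    rw [extB, Ideal.map_le_iff_le_comap]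
    intro b hb
    rw [Ideal.mem_comap]
    have h1 : sigSub (k := k) i j (rename Sum.inr b) = iotaSub i j b := by
      have := DFunLike.congr_fun (sig_comp_renameInr (k := k) i j) b
      simpa using this
    have h2 := sub_sig_mem i j (rename Sum.inr b)
    rw [h1] at h2
    have heq : (rename (Sum.inr (α := Fin r)) b : MvPolynomial (Fin r ⊕ Fin s) k)
        = iotaSub i j b + (rename Sum.inr b - iotaSub i j b) := by ring
    rw [heq]
    exact Submodule.add_mem_sup (Ideal.mem_map_of_mem _ hb) h2
  have hJtB : Jt i j J ≤ extB (r := r) J ⊔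
      Ideal.span {(X (Sum.inl i) - X (Sum.inr j) : MvPolynomial (Fin r ⊕ Fin s) k)} := by
    rw [Jt, Ideal.map_le_iff_le_comap]
    intro b hb
    rw [Ideal.mem_comap]
    have h1 : sigSub (k := k) i j (rename Sum.inr b) = iotaSub i j b := by
      have := DFunLike.congr_fun (sig_comp_renameInr (k := k) i j) b
      simpa using this
    have h2 := sub_sig_mem i j (rename Sum.inr b)
    rw [h1] at h2
    have h2' : (iotaSub i j b : MvPolynomial (Fin r ⊕ Fin s) k) - rename Sum.inr b ∈
        Ideal.span {(X (Sum.inl i) - X (Sum.inr j) : MvPolynomial (Fin r ⊕ Fin s) k)} := by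
      have := neg_mem h2
      simpa using this
    have heq : (iotaSub i j b : MvPolynomial (Fin r ⊕ Fin s) k)
        = rename Sum.inr b + (iotaSub i j b - rename Sum.inr b) := by ring
    rw [heq]
    exact Submodule.add_mem_sup (Ideal.mem_map_of_mem _ hb) h2'
  have hQeq : extA (s := s) I * extB (r := r) J ⊔
      Ideal.span {(X (Sum.inl i) - X (Sum.inr j) : MvPolynomial (Fin r ⊕ Fin s) k)}
      = extA (s := s) I * Jt i j J ⊔
      Ideal.span {(X (Sum.inl i) - X (Sum.inr j) : MvPolynomial (Fin r ⊕ Fin s) k)} := by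
    apply le_antisymm
    · refine sup_le ?_ le_sup_right
      calc extA (s := s) I * extB (r := r) J
          ≤ extA (s := s) I * (Jt i j J ⊔ Ideal.span {(X (Sum.inl i) - X (Sum.inr j) :
              MvPolynomial (Fin r ⊕ Fin s) k)}) := Ideal.mul_mono_right hBJt
        _ = extA (s := s) I * Jt i j J ⊔ extA (s := s) I * Ideal.span {(X (Sum.inl i) -
              X (Sum.inr j) : MvPolynomial (Fin r ⊕ Fin s) k)} := Ideal.mul_sup _ _ _
        _ ≤ extA (s := s) I * Jt i j J ⊔ Ideal.span {(X (Sum.inl i) - X (Sum.inr j) :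
              MvPolynomial (Fin r ⊕ Fin s) k)} := sup_le_sup_left Ideal.mul_le_right _
    · refine sup_le ?_ le_sup_right
      calc extA (s := s) I * Jt i j J
          ≤ extA (s := s) I * (extB (r := r) J ⊔ Ideal.span {(X (Sum.inl i) - X (Sum.inr j) :
              MvPolynomial (Fin r ⊕ Fin s) k)}) := Ideal.mul_mono_right hJtB
        _ = extA (s := s) I * extB (r := r) J ⊔ extA (s := s) I * Ideal.span {(X (Sum.inl i) -
              X (Sum.inr j) : MvPolynomial (Fin r ⊕ Fin s) k)} := Ideal.mul_sup _ _ _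
        _ ≤ extA (s := s) I * extB (r := r) J ⊔ Ideal.span {(X (Sum.inl i) - X (Sum.inr j) :
              MvPolynomial (Fin r ⊕ Fin s) k)} := sup_le_sup_left Ideal.mul_le_right _
  have hgσ : sigSub i j g = g := by
    have h1 : sigSub (k := k) i j aR = aR := by
      have := DFunLike.congr_fun (sig_comp_renameInl (k := k) i j) a
      simpa using this
    have h2 : sigSub (k := k) i j bt = bt := by
      have := DFunLike.congr_fun (sig_comp_iota (k := k) i j) b₀
      simpa using this
    rw [hg, map_mul, map_mul, h1, h2, hxc, map_pow, sigSub_X_inl]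
  have hJtle : Jt i j J ≤ Ideal.span {xc} := by
    rw [Jt]
    refine le_trans (Ideal.map_mono hJc) ?_
    rw [Ideal.map_span, Set.image_singleton]
    have : iotaSub (k := k) i j ((X j : MvPolynomial (Fin s) k) ^ c) = xc := by
      rw [map_pow, iotaSub_X, if_pos rfl, hxc]
    rw [this]
  have hxc0 : xc ≠ 0 := pow_ne_zero _ (X_ne_zero _)
  -- the main colon computation
  have main : ∀ h : MvPolynomial (Fin r ⊕ Fin s) k,
      h * g ∈ extA (s := s) I * extB (r := r) J ⊔
        Ideal.span {(X (Sum.inl i) - X (Sum.inr j) : MvPolynomial (Fin r ⊕ Fin s) k)}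
      ↔ h ∈ extA (s := s) 𝔭 ⊔
        Ideal.span {(X (Sum.inl i) - X (Sum.inr j) : MvPolynomial (Fin r ⊕ Fin s) k)} := by
    intro h
    rw [hQeq, mem_sup_xi_iff i j hKσ, mem_sup_xi_iff i j hPσ, map_mul, hgσ]
    constructor
    · intro hmem
      have hle : extA (s := s) I * Jt i j J ≤ Ideal.span {xc} * extA (s := s) I := by
        calc extA (s := s) I * Jt i j J ≤ extA (s := s) I * Ideal.span {xc} :=
              Ideal.mul_mono_right hJtle
          _ = Ideal.span {xc} * extA (s := s) I := mul_comm _ _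
      obtain ⟨u, huI, hu⟩ := Ideal.mem_span_singleton_mul.1 (hle hmem)
      have heq : sigSub i j h * g = xc * (sigSub i j h * (aR * bt)) := by
        rw [hg]; ring
      have hcan : sigSub i j h * (aR * bt) = u :=
        (mul_left_cancel₀ hxc0 (by rw [hu, heq])).symm
      have hI : (sigSub i j h * bt) * aR ∈ extA (s := s) I := by
        rw [show (sigSub i j h * bt) * aR = sigSub i j h * (aR * bt) by ring, hcan]
        exact huI
      have h𝔭m : sigSub i j h * bt ∈ extA (s := s) 𝔭 := hcolon1 hiff hI
      exact ((extA_isPrime 𝔭 h𝔭prime).mem_or_mem h𝔭m).resolve_right hb0ext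
    · intro hmem
      have h1 : sigSub i j h * aR ∈ extA (s := s) I := hcolon2 hiff hmem
      have h2 : xc * bt ∈ Jt i j J := by
        have heq : xc * bt = iotaSub (k := k) i j ((X j : MvPolynomial (Fin s) k) ^ c * b₀) := by
          rw [map_mul, map_pow, iotaSub_X, if_pos rfl, hxc, hbt]
        rw [heq]
        exact Ideal.mem_map_of_mem _ hbJ
      have heq : sigSub i j h * g = (sigSub i j h * aR) * (xc * bt) := by
        rw [hg]; ring
      rw [heq]
      exact Ideal.mul_mem_mul h1 h2
  have hPprime : (extA (s := s) 𝔭 ⊔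
      Ideal.span {(X (Sum.inl i) - X (Sum.inr j) : MvPolynomial (Fin r ⊕ Fin s) k)}).IsPrime := by
    have hcomap : extA (s := s) 𝔭 ⊔
        Ideal.span {(X (Sum.inl i) - X (Sum.inr j) : MvPolynomial (Fin r ⊕ Fin s) k)}
        = Ideal.comap (sigSub i j) (extA (s := s) 𝔭) :=
      Ideal.ext fun h => (mem_sup_xi_iff i j hPσ h).trans Ideal.mem_comap.symm
    rw [hcomap]
    exact (extA_isPrime 𝔭 h𝔭prime).comap _
  refine isAssociatedPrime_iff.2 ⟨hPprime, Submodule.Quotient.mk g, ?_⟩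
  ext h
  rw [Submodule.mem_colon_singleton, Submodule.mem_bot, ← Submodule.Quotient.mk_smul,
    Submodule.Quotient.mk_eq_zero, smul_eq_mul]
  exact (main h).symm
end

section
/- Under the hypotheses that $I \subseteq k[x_1,\dots,x_r]$ ($r \geq 3$) is a proper monomial ideal with $x_3,\dots,x_r \in \sqrt{I}$ and $J \subseteq k[y_1,\dots,y_s]$ ($s \geq 3$) is a proper monomial ideal with $y_3,\dots,y_s \in \sqrt{J}$, and that $\operatorname{depth} A/I^n > 0$ or $\operatorname{depth} B/J^n > 0$ for a given $n \geq 1$, the element $x_2 - y_2$ is a non-zerodivisor on $R/((IJ)^n, x_1 - y_1)$, where $R = k[x_1,\dots,x_r,y_1,\dots,y_s]$. -/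
open MvPolynomial

/-- An ideal of a polynomial ring is a monomial ideal if it is generated by monomials. -/
def IsMonomialIdeal {k : Type*} [Field k] {σ : Type*} (I : Ideal (MvPolynomial σ k)) : Prop :=
  ∃ s : Set (σ →₀ ℕ), I = Ideal.span ((fun d => MvPolynomial.monomial d (1 : k)) '' s)

namespace Stmt10Aux
variable {k : Type*} [Field k] {σ : Type*}

theorem mono_mem_of_le {P : Ideal (MvPolynomial σ k)} {e d : σ →₀ ℕ}
    (he : monomial e (1:k) ∈ P) (hle : e ≤ d) : monomial d (1:k) ∈ P := by
  have h : monomial (d - e) (1:k) * monomial e (1:k) = monomial d 1 := by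
    rw [monomial_mul, one_mul, tsub_add_cancel_of_le hle]
  rw [← h]; exact Ideal.mul_mem_left _ _ he

theorem mem_of_forall_support {P : Ideal (MvPolynomial σ k)} {p : MvPolynomial σ k}
    (h : ∀ d ∈ p.support, monomial d (1:k) ∈ P) : p ∈ P := by
  rw [p.as_sum]
  exact Ideal.sum_mem _ fun d hd => by
    have h2 : monomial d (coeff d p) = C (coeff d p) * monomial d (1:k) := by
      rw [C_mul_monomial, mul_one]
    rw [h2]; exact Ideal.mul_mem_left _ _ (h d hd)

def MonQ (P : Ideal (MvPolynomial σ k)) : Prop :=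
  ∀ p ∈ P, ∀ d ∈ p.support, monomial d (1:k) ∈ P

theorem monQ_span (S : Set (σ →₀ ℕ)) :
    MonQ (Ideal.span ((fun d => monomial d (1:k)) '' S)) := by
  intro p hp d hd
  obtain ⟨s, hs, hle⟩ := mem_ideal_span_monomial_image.mp hp d hd
  exact mono_mem_of_le (Ideal.subset_span (Set.mem_image_of_mem _ hs)) hle

theorem monQ_mul {P Q : Ideal (MvPolynomial σ k)} (hP : MonQ P) (hQ : MonQ Q) :
    MonQ (P * Q) := by
  classical
  intro p hp
  refine Submodule.mul_induction_on hp (fun a ha b hb => ?_) (fun x y hx hy d hd => ?_)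
  · intro d hd
    have := MvPolynomial.support_mul a b hd
    obtain ⟨d₁, hd₁, d₂, hd₂, rfl⟩ := Finset.mem_add.mp this
    have h1 := hP a ha d₁ hd₁
    have h2 := hQ b hb d₂ hd₂
    have := Ideal.mul_mem_mul h1 h2
    rwa [monomial_mul, one_mul] at this
  · have := MvPolynomial.support_add hd
    rcases Finset.mem_union.mp this with h | h
    exacts [hx d h, hy d h]

theorem monQ_pow {P : Ideal (MvPolynomial σ k)} (hP : MonQ P) {n : ℕ} (hn : 1 ≤ n) :
    MonQ (P ^ n) := by
  induction n, hn using Nat.le_induction with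
  | base => rwa [pow_one]
  | succ m hm ih => rw [pow_succ]; exact monQ_mul ih hP

theorem mapchar {σ' : Type*} (g : σ' → σ) (P : Ideal (MvPolynomial σ' k)) (hP : MonQ P)
    {p : MvPolynomial σ k}
    (hp : p ∈ P.map (rename g : MvPolynomial σ' k →ₐ[k] MvPolynomial σ k)) :
    ∀ d ∈ p.support, ∃ u, monomial u (1:k) ∈ P ∧ Finsupp.mapDomain g u ≤ d := by
  classical
  have hp' : p ∈ Ideal.span ((rename g : MvPolynomial σ' k →ₐ[k] MvPolynomial σ k) '' P) := hp
  refine Submodule.span_induction ?_ ?_ ?_ ?_ hp'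
  · rintro x ⟨q, hq, rfl⟩ d hd
    obtain ⟨u, rfl, hu⟩ := coeff_rename_ne_zero g q d (MvPolynomial.mem_support_iff.mp hd)
    exact ⟨u, hP q hq u (MvPolynomial.mem_support_iff.mpr hu), le_rfl⟩
  · intro d hd; simp at hd
  · intro x y hx hy ihx ihy d hd
    rcases Finset.mem_union.mp (MvPolynomial.support_add hd) with h | h
    exacts [ihx d h, ihy d h]
  · intro c x hx ihx d hd
    rw [smul_eq_mul] at hd
    obtain ⟨d₁, hd₁, d₂, hd₂, rfl⟩ := Finset.mem_add.mp (MvPolynomial.support_mul c x hd)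
    obtain ⟨u, hu, hle⟩ := ihx d₂ hd₂
    exact ⟨u, hu, le_trans hle le_add_self⟩

theorem monQ_map {σ' : Type*} (g : σ' → σ) {P : Ideal (MvPolynomial σ' k)} (hP : MonQ P) :
    MonQ (P.map (rename g : MvPolynomial σ' k →ₐ[k] MvPolynomial σ k)) := by
  intro p hp d hd
  obtain ⟨u, hu, hle⟩ := mapchar g P hP hp d hd
  have h1 : monomial (Finsupp.mapDomain g u) (1:k)
      ∈ P.map (rename g : MvPolynomial σ' k →ₐ[k] MvPolynomial σ k) := by
    have := Ideal.mem_map_of_mem (rename g : MvPolynomial σ' k →ₐ[k] MvPolynomial σ k) hu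
    rwa [rename_monomial] at this
  exact mono_mem_of_le h1 hle

theorem mapDomain_mono {σ' : Type*} (g : σ' → σ) {u v : σ' →₀ ℕ} (h : u ≤ v) :
    Finsupp.mapDomain g u ≤ Finsupp.mapDomain g v := by
  obtain ⟨c, rfl⟩ : ∃ c, v = u + c := ⟨v - u, (add_tsub_cancel_of_le h).symm⟩
  rw [Finsupp.mapDomain_add]
  exact self_le_add_right _ _

theorem triEval {ι : Type*} [DecidableEq ι] (ρ : ι →₀ ℕ) (p q : ι) (c0 c1 : ℕ) (i : ι) :
    (ρ + Finsupp.single p c0 + Finsupp.single q c1) i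
      = ρ i + (if p = i then c0 else 0) + (if q = i then c1 else 0) := by
  rw [Finsupp.add_apply, Finsupp.add_apply, Finsupp.single_apply, Finsupp.single_apply]

section LemmaB
variable [DecidableEq σ] {a b : σ}

noncomputable def F (d : σ →₀ ℕ) (a b : σ) (i j : ℕ) : σ →₀ ℕ :=
  ((d.erase a).erase b) + Finsupp.single a i + Finsupp.single b j

omit [DecidableEq σ] in
lemma F_apply_a (hab : a ≠ b) (d : σ →₀ ℕ) (i j : ℕ) : F d a b i j a = i := by
  simp [F, Finsupp.add_apply, Finsupp.erase_ne hab, Finsupp.erase_same,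
    Finsupp.single_eq_same, Finsupp.single_eq_of_ne' (Ne.symm hab)]

omit [DecidableEq σ] in
lemma F_apply_b (hab : a ≠ b) (d : σ →₀ ℕ) (i j : ℕ) : F d a b i j b = j := by
  simp [F, Finsupp.add_apply, Finsupp.erase_same, Finsupp.single_eq_same,
    Finsupp.single_eq_of_ne' hab]

omit [DecidableEq σ] in
lemma F_add_a (d : σ →₀ ℕ) (i j t : ℕ) :
    F d a b i j + Finsupp.single a t = F d a b (i + t) j := by
  unfold F; rw [Finsupp.single_add a i t]; abel

omit [DecidableEq σ] in
lemma F_add_b (d : σ →₀ ℕ) (i j t : ℕ) :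
    F d a b i j + Finsupp.single b t = F d a b i (j + t) := by
  unfold F; rw [Finsupp.single_add b j t]; abel

omit [DecidableEq σ] in
lemma F_self (hab : a ≠ b) (d : σ →₀ ℕ) : F d a b (d a) (d b) = d := by
  ext c
  by_cases hca : c = a
  · subst hca; rw [F_apply_a hab]
  · by_cases hcb : c = b
    · subst hcb; rw [F_apply_b hab]
    · simp [F, Finsupp.add_apply, Finsupp.erase_ne hca, Finsupp.erase_ne hcb,
        Finsupp.single_eq_of_ne' (Ne.symm hca), Finsupp.single_eq_of_ne' (Ne.symm hcb)]

theorem lemmaB_core (hab : a ≠ b) (T : Set (σ →₀ ℕ))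
    (hP : ∀ (v : σ →₀ ℕ) (E : ℕ), v + Finsupp.single b (E+1) ∈ T →
      v + Finsupp.single a (E+1) ∈ T →
      (v + Finsupp.single b E ∈ T ∨ v + Finsupp.single a E ∈ T))
    (f : MvPolynomial σ k)
    (hf : ∀ d ∈ ((X a - X b) * f).support, d ∈ T)
    (hno : ∀ d ∈ f.support, d ∉ T) :
    f = 0 := by
  by_contra hfne
  obtain ⟨d, hd⟩ := Finset.nonempty_iff_ne_empty.mpr
    (fun h => hfne (support_eq_empty.mp h))
  classical
  obtain ⟨s, hs⟩ : ∃ s, s = d a + d b := ⟨_, rfl⟩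
  have hchain : F d a b (d a) (s - (d a)) = d := by
    have h1 : s - d a = d b := by omega
    rw [h1, F_self hab]
  obtain ⟨K, hK⟩ : ∃ K, K = (Finset.range (s+1)).filter
      (fun i => F d a b i (s - i) ∈ f.support) := ⟨_, rfl⟩
  have hmemK : ∀ i, i ∈ K ↔ (i ≤ s ∧ F d a b i (s - i) ∈ f.support) := by
    intro i
    simp only [hK, Finset.mem_filter, Finset.mem_range, Nat.lt_succ_iff]
  have hKne : K.Nonempty := ⟨d a, (hmemK _).mpr ⟨by omega, by rw [hchain]; exact hd⟩⟩
  obtain ⟨imax, himax⟩ : ∃ i, i = K.max' hKne := ⟨_, rfl⟩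
  obtain ⟨imin, himin⟩ : ∃ i, i = K.min' hKne := ⟨_, rfl⟩
  have hmaxK := (hmemK imax).mp (himax ▸ K.max'_mem hKne)
  have hminK := (hmemK imin).mp (himin ▸ K.min'_mem hKne)
  have hminmax : imin ≤ imax := by
    rw [himin, himax]; exact K.min'_le _ (K.max'_mem hKne)
  have hnot : ∀ i, i ≤ s → (i < imin ∨ imax < i) → F d a b i (s - i) ∉ f.support := by
    intro i his hi hmem
    have hiK := (hmemK i).mpr ⟨his, hmem⟩
    rcases hi with h | h
    · have := K.min'_le i hiK; omega
    · have := K.le_max' i hiK; omega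
  have claimup : F d a b (imax+1) (s - imax) ∈ T := by
    apply hf
    rw [MvPolynomial.mem_support_iff, sub_mul, coeff_sub]
    have h1 : coeff (F d a b (imax+1) (s - imax)) (X a * f)
        = coeff (F d a b imax (s - imax)) f := by
      have e1 : Finsupp.single a 1 + F d a b imax (s-imax) = F d a b (imax+1) (s-imax) := by
        rw [add_comm, F_add_a]
      rw [← e1, coeff_X_mul]
    have h2 : coeff (F d a b (imax+1) (s - imax)) (X b * f) = 0 := by
      rcases Nat.lt_or_ge imax s with hlt | hge
      · have e2 : Finsupp.single b 1 + F d a b (imax+1) (s-(imax+1))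
            = F d a b (imax+1) (s-imax) := by
          rw [add_comm, F_add_b]
          congr 1
          omega
        rw [← e2, coeff_X_mul]
        exact MvPolynomial.notMem_support_iff.mp
          (hnot (imax+1) (by omega) (Or.inr (by omega)))
      · rw [coeff_X_mul', if_neg]
        simp only [Finsupp.mem_support_iff, ne_eq, not_not]
        rw [F_apply_b hab]
        omega
    rw [h1, h2, sub_zero]
    exact MvPolynomial.mem_support_iff.mp hmaxK.2
  have claimdown : F d a b imin (s - imin + 1) ∈ T := by
    apply hf
    rw [MvPolynomial.mem_support_iff, sub_mul, coeff_sub]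
    have h1 : coeff (F d a b imin (s - imin + 1)) (X b * f)
        = coeff (F d a b imin (s - imin)) f := by
      have e1 : Finsupp.single b 1 + F d a b imin (s-imin) = F d a b imin (s-imin+1) := by
        rw [add_comm, F_add_b]
      rw [← e1, coeff_X_mul]
    have h2 : coeff (F d a b imin (s - imin + 1)) (X a * f) = 0 := by
      rcases Nat.eq_zero_or_pos imin with h0 | hpos
      · rw [coeff_X_mul', if_neg]
        simp only [Finsupp.mem_support_iff, ne_eq, not_not]
        rw [F_apply_a hab]
        omega
      · have e2 : Finsupp.single a 1 + F d a b (imin-1) (s-(imin-1))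
            = F d a b imin (s-imin+1) := by
          rw [add_comm, F_add_a]
          have h3 : imin - 1 + 1 = imin := by omega
          have h4 : s - (imin - 1) = s - imin + 1 := by omega
          rw [h3, h4]
        rw [← e2, coeff_X_mul]
        exact MvPolynomial.notMem_support_iff.mp
          (hnot (imin-1) (by omega) (Or.inl (by omega)))
    rw [h1, h2, zero_sub]
    exact neg_ne_zero.mpr (MvPolynomial.mem_support_iff.mp hminK.2)
  have hb' : F d a b imin (s - imax) + Finsupp.single b (imax - imin + 1) ∈ T := by
    rw [F_add_b]
    have h4 : s - imax + (imax - imin + 1) = s - imin + 1 := by omega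
    rw [h4]; exact claimdown
  have ha' : F d a b imin (s - imax) + Finsupp.single a (imax - imin + 1) ∈ T := by
    rw [F_add_a]
    have h4 : imin + (imax - imin + 1) = imax + 1 := by omega
    rw [h4]; exact claimup
  rcases hP (F d a b imin (s - imax)) (imax - imin) hb' ha' with h | h
  · rw [F_add_b] at h
    have h4 : s - imax + (imax - imin) = s - imin := by omega
    rw [h4] at h
    exact hno _ hminK.2 h
  · rw [F_add_a] at h
    have h4 : imin + (imax - imin) = imax := by omega
    rw [h4] at h
    exact hno _ hmaxK.2 h

theorem lemmaB (hab : a ≠ b) (T : Set (σ →₀ ℕ))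
    (hUp : ∀ {d d' : σ →₀ ℕ}, d ≤ d' → d ∈ T → d' ∈ T)
    (hP : ∀ (v : σ →₀ ℕ) (E : ℕ), v + Finsupp.single b (E+1) ∈ T →
      v + Finsupp.single a (E+1) ∈ T →
      (v + Finsupp.single b E ∈ T ∨ v + Finsupp.single a E ∈ T)) :
    ∀ (m : ℕ) (f : MvPolynomial σ k), f.support.card ≤ m →
      (∀ d ∈ ((X a - X b) * f).support, d ∈ T) → ∀ d ∈ f.support, d ∈ T := by
  intro m
  induction m with
  | zero =>
    intro f hcard hf d hd
    rw [Nat.le_zero, Finset.card_eq_zero] at hcard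
    rw [hcard] at hd
    exact absurd hd (Finset.notMem_empty d)
  | succ m ih =>
    intro f hcard hf
    by_cases hex : ∃ e ∈ f.support, e ∈ T
    · obtain ⟨e, he, heT⟩ := hex
      obtain ⟨f', hf'⟩ : ∃ f', f' = f - monomial e (coeff e f) := ⟨_, rfl⟩
      have hco : ∀ c, coeff c f' = if e = c then 0 else coeff c f := by
        intro c
        rw [hf', coeff_sub, coeff_monomial]
        split
        · rename_i hec; rw [hec]; ring
        · ring
      have hsupp : f'.support = f.support.erase e := by
        ext c
        rw [MvPolynomial.mem_support_iff, hco, Finset.mem_erase,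
          MvPolynomial.mem_support_iff]
        split
        · rename_i hec; simp [hec.symm]
        · rename_i hec; simp [Ne.symm hec]
      have hcard' : f'.support.card ≤ m := by
        rw [hsupp, Finset.card_erase_of_mem he]
        have := Finset.card_pos.mpr ⟨e, he⟩
        omega
      have hfmul : ∀ d ∈ ((X a - X b) * f').support, d ∈ T := by
        intro d hdm
        have hfd : (X a - X b) * f' = (X a - X b) * f - (X a - X b) * monomial e (coeff e f) := by
          rw [hf', mul_sub]
        rw [hfd] at hdm
        have := MvPolynomial.support_sub _ _ _ hdm
        rcases Finset.mem_union.mp this with h | h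
        · exact hf d h
        · have hXm : (X a - X b) * monomial e (coeff e f)
              = monomial (Finsupp.single a 1 + e) (coeff e f)
                - monomial (Finsupp.single b 1 + e) (coeff e f) := by
            rw [sub_mul, X, X, monomial_mul, monomial_mul, one_mul]
          rw [hXm] at h
          have h2 := MvPolynomial.support_sub _ _ _ h
          have hsm : ∀ (c : σ) (r : k), (monomial (Finsupp.single c 1 + e) r).support
              ⊆ {Finsupp.single c 1 + e} := by
            intro c r
            classical
            rw [support_monomial]
            split <;> simp
          rcases Finset.mem_union.mp h2 with h3 | h3
          · have := hsm a _ h3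
            rw [Finset.mem_singleton] at this
            rw [this]
            exact hUp (by simp [Finsupp.le_iff]) heT
          · have := hsm b _ h3
            rw [Finset.mem_singleton] at this
            rw [this]
            exact hUp (by simp [Finsupp.le_iff]) heT
      intro d hd
      by_cases hde : d = e
      · rw [hde]; exact heT
      · refine ih f' hcard' hfmul d ?_
        rw [hsupp, Finset.mem_erase]
        exact ⟨hde, hd⟩
    · push_neg at hex
      intro d hd
      exact absurd (lemmaB_core hab T hP f hf hex) (fun h => by
        rw [h] at hd; simp at hd)

end LemmaB

theorem depth_zero_of_socle (P : Ideal (MvPolynomial σ k)) (w : σ →₀ ℕ)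
    (hwn : monomial w (1:k) ∉ P)
    (hw : ∀ i : σ, monomial (w + Finsupp.single i 1) (1:k) ∈ P) :
    polyDepth P = 0 := by
  have hmul : ∀ r ∈ Ideal.span (Set.range (X : σ → MvPolynomial σ k)),
      r * monomial w (1:k) ∈ P := by
    intro r hr
    refine Submodule.span_induction (fun x hx => ?_) (by simp)
      (fun x y hx hy h1 h2 => ?_) (fun c x hx h1 => ?_) hr
    · obtain ⟨i, rfl⟩ := hx
      rw [X, monomial_mul, one_mul, add_comm]
      exact hw i
    · rw [add_mul]; exact Ideal.add_mem _ h1 h2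
    · rw [smul_mul_assoc]; exact Submodule.smul_mem _ _ h1
  unfold polyDepth idealDepth
  have hsub : {n : ℕ | ∃ rs : List (MvPolynomial σ k), rs.length = n ∧
      (∀ r ∈ rs, r ∈ Ideal.span (Set.range (X : σ → MvPolynomial σ k))) ∧
      RingTheory.Sequence.IsRegular (MvPolynomial σ k ⧸ P) rs} ⊆ {0} := by
    rintro q ⟨rs, hlen, hmem, hreg⟩
    cases rs with
    | nil => simp at hlen; simp [hlen.symm]
    | cons r tl =>
      exfalso
      have hhead : IsSMulRegular (MvPolynomial σ k ⧸ P) r :=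
        ((RingTheory.Sequence.isWeaklyRegular_cons_iff _ r tl).mp
          hreg.toIsWeaklyRegular).1
      have hz : (Ideal.Quotient.mk P) (monomial w (1:k)) ≠ 0 := by
        rw [Ne, Ideal.Quotient.eq_zero_iff_mem]; exact hwn
      have hsm : r • (Ideal.Quotient.mk P) (monomial w (1:k)) = 0 := by
        rw [← Ideal.Quotient.mk_eq_mk, ← Submodule.Quotient.mk_smul, smul_eq_mul,
          Ideal.Quotient.mk_eq_mk, Ideal.Quotient.eq_zero_iff_mem]
        exact hmul r (hmem r (List.mem_cons_self))
      apply hz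
      apply hhead
      show r • _ = r • (0 : MvPolynomial σ k ⧸ P)
      rw [hsm, smul_zero]
  rcases Set.subset_singleton_iff_eq.mp hsub with h | h
  · rw [h]; exact csSup_empty
  · rw [h]; exact csSup_singleton 0

theorem dagger {m : ℕ} (I : Ideal (MvPolynomial (Fin m) k))
    (hIrad : ∀ i : Fin m, 2 ≤ (i:ℕ) → X i ∈ I.radical) (n : ℕ)
    (hd : 0 < polyDepth (I^n)) (x0 x1 : Fin m) (hx0 : (x0:ℕ) = 0) (hx1 : (x1:ℕ) = 1) :
    ∀ w, monomial (w + Finsupp.single x0 1) (1:k) ∈ I^n →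
      monomial (w + Finsupp.single x1 1) (1:k) ∈ I^n → monomial w (1:k) ∈ I^n := by
  intro w h0 h1
  by_contra hwn
  have htri : ∀ i : Fin m, i = x0 ∨ i = x1 ∨ 2 ≤ (i:ℕ) := by
    intro i
    rcases Nat.lt_or_ge (i:ℕ) 2 with h | h
    · interval_cases h2 : (i:ℕ)
      · left; exact Fin.ext (by omega)
      · right; left; exact Fin.ext (by omega)
    · right; right; exact h
  have hpow : ∀ i : Fin m, 2 ≤ (i:ℕ) → ∃ c : ℕ, monomial (Finsupp.single i c) (1:k) ∈ I^n := by
    intro i hi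
    obtain ⟨t, ht⟩ := hIrad i hi
    refine ⟨t * n, ?_⟩
    have := Ideal.pow_mem_pow ht n
    rwa [← pow_mul, X_pow_eq_monomial] at this
  classical
  obtain ⟨C, hC⟩ : ∃ C : Fin m → ℕ, ∀ i : Fin m, 2 ≤ (i:ℕ) →
      monomial (Finsupp.single i (C i)) (1:k) ∈ I^n := by
    refine ⟨fun i => if h : 2 ≤ (i:ℕ) then (hpow i h).choose else 0, fun i hi => ?_⟩
    simp only [dif_pos hi]
    exact (hpow i hi).choose_spec
  have greedy : ∀ (K : ℕ) (w : Fin m →₀ ℕ), (∑ i, (C i - w i)) ≤ K →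
      monomial w (1:k) ∉ I^n →
      monomial (w + Finsupp.single x0 1) (1:k) ∈ I^n →
      monomial (w + Finsupp.single x1 1) (1:k) ∈ I^n →
      ∃ w', monomial w' (1:k) ∉ I^n ∧ ∀ i, monomial (w' + Finsupp.single i 1) (1:k) ∈ I^n := by
    intro K
    induction K with
    | zero =>
      intro w hsum hwn h0 h1
      by_cases hall : ∀ i : Fin m, 2 ≤ (i:ℕ) → monomial (w + Finsupp.single i 1) (1:k) ∈ I^n
      · refine ⟨w, hwn, fun i => ?_⟩
        rcases htri i with rfl | rfl | h2
        · exact h0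
        · exact h1
        · exact hall i h2
      · exfalso
        push_neg at hall
        obtain ⟨i, hi2, hine⟩ := hall
        have hwi : w i < C i := by
          by_contra hge
          push_neg at hge
          exact hwn (mono_mem_of_le (hC i hi2) (Finsupp.single_le_iff.mpr hge))
        have hterm : C i - w i = 0 := by
          have hs0 : (∑ j, (C j - w j)) = 0 := by omega
          exact Finset.sum_eq_zero_iff.mp hs0 i (Finset.mem_univ i)
        omega
    | succ K ih =>
      intro w hsum hwn h0 h1
      by_cases hall : ∀ i : Fin m, 2 ≤ (i:ℕ) → monomial (w + Finsupp.single i 1) (1:k) ∈ I^n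
      · refine ⟨w, hwn, fun i => ?_⟩
        rcases htri i with rfl | rfl | h2
        · exact h0
        · exact h1
        · exact hall i h2
      · push_neg at hall
        obtain ⟨i, hi2, hine⟩ := hall
        have hwi : w i < C i := by
          by_contra hge
          push_neg at hge
          exact hwn (mono_mem_of_le (hC i hi2) (Finsupp.single_le_iff.mpr hge))
        obtain ⟨w2, hw2⟩ : ∃ w2 : Fin m →₀ ℕ, w2 = w + Finsupp.single i 1 := ⟨_, rfl⟩
        have hw2app : ∀ j : Fin m, w2 j = w j + (if i = j then 1 else 0) := by
          intro j
          rw [hw2, Finsupp.add_apply, Finsupp.single_apply]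
        have hsum' : (∑ j, (C j - w2 j)) ≤ K := by
          have e1 : ∀ j : Fin m, j ≠ i → C j - w2 j = C j - w j := by
            intro j hj
            rw [hw2app, if_neg (Ne.symm hj)]
            omega
          have e2 : C i - w2 i = C i - w i - 1 := by
            rw [hw2app, if_pos rfl]
            omega
          have s1 := (Finset.add_sum_erase Finset.univ
            (fun j => C j - w2 j) (Finset.mem_univ i)).symm
          have s2 := (Finset.add_sum_erase Finset.univ
            (fun j => C j - w j) (Finset.mem_univ i)).symm
          have s3 : ∑ j ∈ Finset.univ.erase i, (C j - w2 j)
              = ∑ j ∈ Finset.univ.erase i, (C j - w j) :=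
            Finset.sum_congr rfl (fun j hj => e1 j (Finset.mem_erase.mp hj).1)
          rw [s1, s3, e2]
          rw [s2] at hsum
          omega
        rw [← hw2] at hine
        refine ih w2 hsum' hine ?_ ?_
        · apply mono_mem_of_le h0
          rw [hw2, add_right_comm]
          exact self_le_add_right _ _
        · apply mono_mem_of_le h1
          rw [hw2, add_right_comm]
          exact self_le_add_right _ _
  obtain ⟨w', hw'n, hw'⟩ := greedy (∑ i, (C i - w i)) w le_rfl hwn h0 h1
  have := depth_zero_of_socle (I^n) w' hw'n hw'
  omega

theorem stepdown {m : ℕ} (P : Ideal (MvPolynomial (Fin m) k)) (x0 x1 : Fin m)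
    (hdag : ∀ w, monomial (w + Finsupp.single x0 1) (1:k) ∈ P →
      monomial (w + Finsupp.single x1 1) (1:k) ∈ P → monomial w (1:k) ∈ P)
    (ρ : Fin m →₀ ℕ) :
    ∀ (t e c F : ℕ), e ≤ c + t →
      monomial (ρ + Finsupp.single x0 e + Finsupp.single x1 F) (1:k) ∈ P →
      monomial (ρ + Finsupp.single x0 c + Finsupp.single x1 (F+1)) (1:k) ∈ P →
      monomial (ρ + Finsupp.single x0 c + Finsupp.single x1 F) (1:k) ∈ P := by
  have hadd0 : ∀ (c t F : ℕ), (ρ + Finsupp.single x0 c + Finsupp.single x1 F)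
      + Finsupp.single x0 t = ρ + Finsupp.single x0 (c + t) + Finsupp.single x1 F := by
    intro c t F
    rw [Finsupp.single_add x0 c t]; abel
  have hadd1 : ∀ (c t F : ℕ), (ρ + Finsupp.single x0 c + Finsupp.single x1 F)
      + Finsupp.single x1 t = ρ + Finsupp.single x0 c + Finsupp.single x1 (F + t) := by
    intro c t F
    rw [Finsupp.single_add x1 F t]; abel
  have hmono : ∀ (e c F : ℕ), e ≤ c →
      ρ + Finsupp.single x0 e + Finsupp.single x1 F
        ≤ ρ + Finsupp.single x0 c + Finsupp.single x1 F := by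
    intro e c F hec
    have h5 : e + (c - e) = c := by omega
    calc ρ + Finsupp.single x0 e + Finsupp.single x1 F
        ≤ (ρ + Finsupp.single x0 e + Finsupp.single x1 F) + Finsupp.single x0 (c - e) :=
          self_le_add_right _ _
      _ = ρ + Finsupp.single x0 (e + (c - e)) + Finsupp.single x1 F := hadd0 e (c - e) F
      _ = ρ + Finsupp.single x0 c + Finsupp.single x1 F := by rw [h5]
  intro t
  induction t with
  | zero =>
    intro e c F hec h1 h2
    exact mono_mem_of_le h1 (hmono e c F (by omega))
  | succ t ih =>
    intro e c F hec h1 h2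
    by_cases hle : e ≤ c + t
    · exact ih e c F hle h1 h2
    · apply hdag (ρ + Finsupp.single x0 c + Finsupp.single x1 F)
      · rw [hadd0]
        have h2' : monomial (ρ + Finsupp.single x0 (c+1) + Finsupp.single x1 (F+1)) (1:k) ∈ P :=
          mono_mem_of_le h2 (hmono c (c+1) (F+1) (by omega))
        exact ih e (c+1) F (by omega) h1 h2'
      · rw [hadd1]
        exact h2

def collapseFn {r s : ℕ} (x0 : Fin r) (y0 : Fin s) : Fin r ⊕ Fin s → Fin r ⊕ Fin s :=
  Sum.elim Sum.inl (fun j => if j = y0 then Sum.inl x0 else Sum.inr j)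

theorem tau_diff {r s : ℕ} (x0 : Fin r) (y0 : Fin s) (p : MvPolynomial (Fin r ⊕ Fin s) k) :
    rename (collapseFn x0 y0) p - p ∈
      Ideal.span ({X (Sum.inl x0) - X (Sum.inr y0)} : Set (MvPolynomial (Fin r ⊕ Fin s) k)) := by
  induction p using MvPolynomial.induction_on with
  | C a => rw [rename_C, sub_self]; exact Ideal.zero_mem _
  | add p q hp hq =>
    rw [map_add]
    have he : rename (collapseFn x0 y0) p + rename (collapseFn x0 y0) q - (p + q)
        = (rename (collapseFn x0 y0) p - p) + (rename (collapseFn x0 y0) q - q) := by ring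
    rw [he]; exact Ideal.add_mem _ hp hq
  | mul_X p i hp =>
    rw [map_mul, rename_X]
    have key : X (collapseFn x0 y0 i) - X i ∈
        Ideal.span ({X (Sum.inl x0) - X (Sum.inr y0)} : Set (MvPolynomial (Fin r ⊕ Fin s) k)) := by
      rcases i with i | j
      · have : collapseFn x0 y0 (Sum.inl i) = Sum.inl i := rfl
        rw [this, sub_self]; exact Ideal.zero_mem _
      · by_cases hj : j = y0
        · have hcoll : collapseFn x0 y0 (Sum.inr j) = Sum.inl x0 := by simp [collapseFn, hj]
          rw [hcoll, hj]
          exact Ideal.subset_span rfl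
        · have : collapseFn x0 y0 (Sum.inr j) = Sum.inr j := by simp [collapseFn, hj]
          rw [this, sub_self]; exact Ideal.zero_mem _
    have he : rename (collapseFn x0 y0) p * X (collapseFn x0 y0 i) - p * X i
        = rename (collapseFn x0 y0) p * (X (collapseFn x0 y0 i) - X i)
          + (rename (collapseFn x0 y0) p - p) * X i := by ring
    rw [he]
    exact Ideal.add_mem _ (Ideal.mul_mem_left _ _ key) (Ideal.mul_mem_right _ _ hp)

theorem memL_iff {r s : ℕ} (x0 : Fin r) (y0 : Fin s)
    (M : Ideal (MvPolynomial (Fin r ⊕ Fin s) k)) (f : MvPolynomial (Fin r ⊕ Fin s) k) :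
    f ∈ M ⊔ Ideal.span {X (Sum.inl x0) - X (Sum.inr y0)} ↔
      rename (collapseFn x0 y0) f ∈ M.map (rename (collapseFn x0 y0) :
        MvPolynomial (Fin r ⊕ Fin s) k →ₐ[k] MvPolynomial (Fin r ⊕ Fin s) k) := by
  constructor
  · intro h
    obtain ⟨m, hm, e, he, rfl⟩ := Submodule.mem_sup.mp h
    rw [map_add]
    have h0 : rename (collapseFn x0 y0) e = 0 := by
      obtain ⟨c, rfl⟩ := Ideal.mem_span_singleton'.mp he
      rw [map_mul, map_sub, rename_X, rename_X]
      have h1 : collapseFn x0 y0 (Sum.inl x0) = Sum.inl x0 := rfl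
      have h2 : collapseFn x0 y0 (Sum.inr y0) = Sum.inl x0 := by simp [collapseFn]
      rw [h1, h2, sub_self, mul_zero]
    rw [h0, add_zero]
    exact Ideal.mem_map_of_mem _ hm
  · intro h
    have hNL : M.map (rename (collapseFn x0 y0) :
        MvPolynomial (Fin r ⊕ Fin s) k →ₐ[k] MvPolynomial (Fin r ⊕ Fin s) k)
        ≤ M ⊔ Ideal.span {X (Sum.inl x0) - X (Sum.inr y0)} := by
      rw [Ideal.map_le_iff_le_comap]
      intro mm hmm
      rw [Ideal.mem_comap]
      have h1 : rename (collapseFn x0 y0) mm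
          = (rename (collapseFn x0 y0) mm - mm) + mm := by ring
      rw [h1]
      exact Ideal.add_mem _ (Submodule.mem_sup_right (tau_diff x0 y0 mm))
        (Submodule.mem_sup_left hmm)
    have h2 : f = rename (collapseFn x0 y0) f - (rename (collapseFn x0 y0) f - f) := by ring
    rw [h2]
    exact Ideal.sub_mem _ (hNL h) (Submodule.mem_sup_right (tau_diff x0 y0 f))

theorem Meq {r s : ℕ} (I1 : Ideal (MvPolynomial (Fin r) k)) (J1 : Ideal (MvPolynomial (Fin s) k))
    (n : ℕ) : (extA (s := s) I1 * extB (r := r) J1)^n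
      = extA (s := s) (I1^n) * extB (r := r) (J1^n) := by
  rw [mul_pow]; unfold extA extB; rw [← Ideal.map_pow, ← Ideal.map_pow]

theorem Mchar {r s : ℕ} (I1 : Ideal (MvPolynomial (Fin r) k)) (J1 : Ideal (MvPolynomial (Fin s) k))
    (hI : MonQ I1) (hJ : MonQ J1) {w : (Fin r ⊕ Fin s) →₀ ℕ}
    (hw : monomial w (1:k) ∈ extA (s := s) I1 * extB (r := r) J1) :
    ∃ u v, monomial u (1:k) ∈ I1 ∧ monomial v (1:k) ∈ J1 ∧
      Finsupp.mapDomain Sum.inl u + Finsupp.mapDomain Sum.inr v ≤ w := by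
  classical
  have key : ∀ p ∈ extA (s := s) I1 * extB (r := r) J1, ∀ d ∈ p.support,
      ∃ u v, monomial u (1:k) ∈ I1 ∧ monomial v (1:k) ∈ J1 ∧
        Finsupp.mapDomain Sum.inl u + Finsupp.mapDomain Sum.inr v ≤ d := by
    intro p hp
    refine Submodule.mul_induction_on hp (fun a ha b hb => ?_) (fun x y hx hy d hd => ?_)
    · intro d hd
      obtain ⟨d₁, hd₁, d₂, hd₂, rfl⟩ := Finset.mem_add.mp (MvPolynomial.support_mul a b hd)
      obtain ⟨u, hu, hleu⟩ := mapchar Sum.inl I1 hI ha d₁ hd₁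
      obtain ⟨v, hv, hlev⟩ := mapchar Sum.inr J1 hJ hb d₂ hd₂
      exact ⟨u, v, hu, hv, add_le_add hleu hlev⟩
    · rcases Finset.mem_union.mp (MvPolynomial.support_add hd) with h | h
      exacts [hx d h, hy d h]
  exact key _ hw w (by rw [support_monomial]; simp)

end Stmt10Aux

open Stmt10Aux in
theorem stmt10main {k : Type*} [Field k] {r s : ℕ} (hr : 3 ≤ r) (hs : 3 ≤ s)
    (I : Ideal (MvPolynomial (Fin r) k)) (J : Ideal (MvPolynomial (Fin s) k))
    (hI1 : I ≠ ⊤) (hIm : IsMonomialIdeal I)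
    (hJ1 : J ≠ ⊤) (hJm : IsMonomialIdeal J)
    (hIrad : ∀ i : Fin r, 2 ≤ (i : ℕ) → X i ∈ I.radical)
    (hJrad : ∀ j : Fin s, 2 ≤ (j : ℕ) → X j ∈ J.radical)
    (n : ℕ) (hn : 1 ≤ n)
    (hdepth : 0 < polyDepth (I ^ n) ∨ 0 < polyDepth (J ^ n))
    (x0 x1 : Fin r) (y0 y1 : Fin s)
    (hx0 : (x0:ℕ) = 0) (hx1 : (x1:ℕ) = 1) (hy0 : (y0:ℕ) = 0) (hy1 : (y1:ℕ) = 1) :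
    IsSMulRegular
      (MvPolynomial (Fin r ⊕ Fin s) k ⧸
        ((extA (s := s) I * extB (r := r) J) ^ n ⊔
          Ideal.span {X (Sum.inl x0) - X (Sum.inr y0)}))
      (X (Sum.inl x1) - X (Sum.inr y1) : MvPolynomial (Fin r ⊕ Fin s) k) := by
  classical
  have hx01 : x0 ≠ x1 := fun h => by rw [h, hx1] at hx0; omega
  have hy01 : y0 ≠ y1 := fun h => by rw [h, hy1] at hy0; omega
  have hab : (Sum.inl x1 : Fin r ⊕ Fin s) ≠ Sum.inr y1 := by simp
  -- monomial quality
  have hQI : MonQ I := by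
    obtain ⟨SI, hSI⟩ := hIm
    rw [hSI]; exact monQ_span SI
  have hQJ : MonQ J := by
    obtain ⟨SJ, hSJ⟩ := hJm
    rw [hSJ]; exact monQ_span SJ
  have hMonQIn : MonQ (I^n) := monQ_pow hQI hn
  have hMonQJn : MonQ (J^n) := monQ_pow hQJ hn
  set M0 : Ideal (MvPolynomial (Fin r ⊕ Fin s) k) := (extA (s := s) I * extB (r := r) J) ^ n
    with hM0
  have hMonQM : MonQ M0 := by
    rw [hM0, Meq I J n]
    refine monQ_mul ?_ ?_
    · show MonQ ((I^n).map (rename (Sum.inl : Fin r → Fin r ⊕ Fin s) :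
        MvPolynomial (Fin r) k →ₐ[k] MvPolynomial (Fin r ⊕ Fin s) k))
      exact monQ_map _ hMonQIn
    · show MonQ ((J^n).map (rename (Sum.inr : Fin s → Fin r ⊕ Fin s) :
        MvPolynomial (Fin s) k →ₐ[k] MvPolynomial (Fin r ⊕ Fin s) k))
      exact monQ_map _ hMonQJn
  set N : Ideal (MvPolynomial (Fin r ⊕ Fin s) k) := M0.map (rename (collapseFn x0 y0) :
    MvPolynomial (Fin r ⊕ Fin s) k →ₐ[k] MvPolynomial (Fin r ⊕ Fin s) k) with hN
  set T : Set ((Fin r ⊕ Fin s) →₀ ℕ) := {d | monomial d (1:k) ∈ N} with hT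
  have hMonQN : MonQ N := monQ_map _ hMonQM
  have hUp : ∀ {d d' : (Fin r ⊕ Fin s) →₀ ℕ}, d ≤ d' → d ∈ T → d' ∈ T := by
    intro d d' h hd
    have hd' : monomial d (1:k) ∈ N := hd
    have : monomial d' (1:k) ∈ N := mono_mem_of_le hd' h
    exact this
  -- normal form of collapsed exponents
  have Wcoord : ∀ (u : Fin r →₀ ℕ) (v : Fin s →₀ ℕ),
      Finsupp.mapDomain (collapseFn x0 y0)
        (Finsupp.mapDomain Sum.inl u + Finsupp.mapDomain Sum.inr v)
      = Finsupp.mapDomain Sum.inl u + (Finsupp.single (Sum.inl x0) (v y0)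
          + Finsupp.mapDomain Sum.inr (v.erase y0)) := by
    intro u v
    rw [Finsupp.mapDomain_add]
    congr 1
    · rw [← Finsupp.mapDomain_comp]
      have hcomp : collapseFn x0 y0 ∘ Sum.inl = (Sum.inl : Fin r → Fin r ⊕ Fin s) := rfl
      rw [hcomp]
    · rw [← Finsupp.mapDomain_comp]
      conv_lhs => rw [← Finsupp.single_add_erase y0 v]
      rw [Finsupp.mapDomain_add, Finsupp.mapDomain_single]
      congr 1
      · have hcy : (collapseFn x0 y0 ∘ Sum.inr) y0 = Sum.inl x0 := by simp [collapseFn]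
        rw [hcy]
      · refine Finsupp.mapDomain_congr (fun x hx => ?_)
        have hxne : x ≠ y0 := by
          intro hxy
          rw [hxy] at hx
          exact (Finsupp.notMem_support_iff.mpr Finsupp.erase_same) hx
        simp [collapseFn, hxne]
  have evalInl : ∀ (u : Fin r →₀ ℕ) (v : Fin s →₀ ℕ) (i : Fin r),
      ((Finsupp.mapDomain Sum.inl u + (Finsupp.single (Sum.inl x0) (v y0)
        + Finsupp.mapDomain Sum.inr (v.erase y0)) : (Fin r ⊕ Fin s) →₀ ℕ)) (Sum.inl i)
      = u i + (if i = x0 then v y0 else 0) := by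
    intro u v i
    have e1 : (Finsupp.mapDomain (Sum.inl : Fin r → Fin r ⊕ Fin s) u) (Sum.inl i) = u i :=
      Finsupp.mapDomain_apply Sum.inl_injective u i
    have e2 : (Finsupp.mapDomain (Sum.inr : Fin s → Fin r ⊕ Fin s) (v.erase y0)) (Sum.inl i)
        = 0 := Finsupp.mapDomain_notin_range _ _ (by simp)
    have e3 : (Finsupp.single (Sum.inl x0 : Fin r ⊕ Fin s) (v y0)) (Sum.inl i)
        = if i = x0 then v y0 else 0 := by
      rw [Finsupp.single_apply]
      by_cases hix : i = x0
      · rw [if_pos (by rw [hix]), if_pos hix]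
      · rw [if_neg (by simp only [Sum.inl.injEq]; exact fun h => hix h.symm), if_neg hix]
    rw [Finsupp.add_apply, Finsupp.add_apply, e1, e2, e3, add_zero]
  have evalInr : ∀ (u : Fin r →₀ ℕ) (v : Fin s →₀ ℕ) (j : Fin s),
      ((Finsupp.mapDomain Sum.inl u + (Finsupp.single (Sum.inl x0) (v y0)
        + Finsupp.mapDomain Sum.inr (v.erase y0)) : (Fin r ⊕ Fin s) →₀ ℕ)) (Sum.inr j)
      = if j = y0 then 0 else v j := by
    intro u v j
    have e1 : (Finsupp.mapDomain (Sum.inl : Fin r → Fin r ⊕ Fin s) u) (Sum.inr j) = 0 :=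
      Finsupp.mapDomain_notin_range _ _ (by simp)
    have e2 : (Finsupp.single (Sum.inl x0 : Fin r ⊕ Fin s) (v y0)) (Sum.inr j) = 0 := by
      rw [Finsupp.single_apply, if_neg (by simp)]
    have e3 : (Finsupp.mapDomain (Sum.inr : Fin s → Fin r ⊕ Fin s) (v.erase y0)) (Sum.inr j)
        = if j = y0 then 0 else v j := by
      rw [Finsupp.mapDomain_apply Sum.inr_injective]
      by_cases hjy : j = y0
      · rw [if_pos hjy, hjy]; exact Finsupp.erase_same
      · rw [if_neg hjy]; exact Finsupp.erase_ne hjy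
    rw [Finsupp.add_apply, Finsupp.add_apply, e1, e2, e3, zero_add, zero_add]
  -- characterization of T
  have Tmp : ∀ d ∈ T, ∃ u v, monomial u (1:k) ∈ I^n ∧ monomial v (1:k) ∈ J^n ∧
      (u x0 + v y0 ≤ d (Sum.inl x0)) ∧ (∀ i : Fin r, i ≠ x0 → u i ≤ d (Sum.inl i)) ∧
      (∀ j : Fin s, j ≠ y0 → v j ≤ d (Sum.inr j)) := by
    intro d hd
    rw [hT, Set.mem_setOf_eq, hN] at hd
    have hsupp : d ∈ (monomial d (1:k)).support := by
      rw [support_monomial]; simp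
    obtain ⟨w, hwM, hwle⟩ := mapchar (collapseFn x0 y0) M0 hMonQM hd d hsupp
    rw [hM0, Meq I J n] at hwM
    obtain ⟨u, v, hu, hv, hlew⟩ := Mchar (I^n) (J^n) hMonQIn hMonQJn hwM
    have h1 : Finsupp.mapDomain (collapseFn x0 y0)
        (Finsupp.mapDomain Sum.inl u + Finsupp.mapDomain Sum.inr v) ≤ d :=
      le_trans (mapDomain_mono _ hlew) hwle
    rw [Wcoord] at h1
    refine ⟨u, v, hu, hv, ?_, ?_, ?_⟩
    · have h2 := Finsupp.le_def.mp h1 (Sum.inl x0)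
      rw [evalInl, if_pos rfl] at h2
      exact h2
    · intro i hi
      have h2 := Finsupp.le_def.mp h1 (Sum.inl i)
      rw [evalInl, if_neg hi, add_zero] at h2
      exact h2
    · intro j hj
      have h2 := Finsupp.le_def.mp h1 (Sum.inr j)
      rw [evalInr, if_neg hj] at h2
      exact h2
  have Tmpr : ∀ (d : (Fin r ⊕ Fin s) →₀ ℕ) (u : Fin r →₀ ℕ) (v : Fin s →₀ ℕ),
      monomial u (1:k) ∈ I^n → monomial v (1:k) ∈ J^n →
      (u x0 + v y0 ≤ d (Sum.inl x0)) → (∀ i : Fin r, i ≠ x0 → u i ≤ d (Sum.inl i)) →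
      (∀ j : Fin s, j ≠ y0 → v j ≤ d (Sum.inr j)) → d ∈ T := by
    intro d u v hu hv h0 hi hj
    have hWle : Finsupp.mapDomain (collapseFn x0 y0)
        (Finsupp.mapDomain Sum.inl u + Finsupp.mapDomain Sum.inr v) ≤ d := by
      rw [Wcoord, Finsupp.le_def]
      intro z
      rcases z with i | j
      · rw [evalInl]
        by_cases hix : i = x0
        · rw [if_pos hix, hix]
          exact h0
        · rw [if_neg hix, add_zero]
          exact hi i hix
      · rw [evalInr]
        by_cases hjy : j = y0
        · rw [if_pos hjy]; exact Nat.zero_le _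
        · rw [if_neg hjy]; exact hj j hjy
    have h1 : monomial (Finsupp.mapDomain Sum.inl u) (1:k) ∈ extA (s := s) (I^n) := by
      unfold extA
      have := Ideal.mem_map_of_mem (rename (Sum.inl : Fin r → Fin r ⊕ Fin s) :
        MvPolynomial (Fin r) k →ₐ[k] MvPolynomial (Fin r ⊕ Fin s) k) hu
      rwa [rename_monomial] at this
    have h2 : monomial (Finsupp.mapDomain Sum.inr v) (1:k) ∈ extB (r := r) (J^n) := by
      unfold extB
      have := Ideal.mem_map_of_mem (rename (Sum.inr : Fin s → Fin r ⊕ Fin s) :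
        MvPolynomial (Fin s) k →ₐ[k] MvPolynomial (Fin r ⊕ Fin s) k) hv
      rwa [rename_monomial] at this
    have h3 := Ideal.mul_mem_mul h1 h2
    rw [monomial_mul, one_mul, ← Meq I J n, ← hM0] at h3
    have h4 := Ideal.mem_map_of_mem (rename (collapseFn x0 y0) :
      MvPolynomial (Fin r ⊕ Fin s) k →ₐ[k] MvPolynomial (Fin r ⊕ Fin s) k) h3
    rw [rename_monomial] at h4
    rw [hT, Set.mem_setOf_eq, hN]
    exact mono_mem_of_le h4 hWle
  -- single evaluation helper
  have addSingleEval : ∀ (vv : (Fin r ⊕ Fin s) →₀ ℕ) (z w : Fin r ⊕ Fin s) (c : ℕ),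
      (vv + Finsupp.single z c) w = vv w + (if z = w then c else 0) := by
    intro vv z w c
    rw [Finsupp.add_apply, Finsupp.single_apply]
  -- the key step property
  have hP : ∀ (vv : (Fin r ⊕ Fin s) →₀ ℕ) (E : ℕ),
      vv + Finsupp.single (Sum.inr y1) (E+1) ∈ T →
      vv + Finsupp.single (Sum.inl x1) (E+1) ∈ T →
      (vv + Finsupp.single (Sum.inr y1) E ∈ T ∨ vv + Finsupp.single (Sum.inl x1) E ∈ T) := by
    intro vv E hbT haT
    obtain ⟨u1, v1, hu1, hv1, h10, h1i, h1j⟩ := Tmp _ hbT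
    obtain ⟨u2, v2, hu2, hv2, h20, h2i, h2j⟩ := Tmp _ haT
    rcases hdepth with hdI | hdJ
    · -- reduce u2 at x1; right disjunct
      right
      have hdag := dagger I hIrad n hdI x0 x1 hx0 hx1
      have c20 : u2 x0 + v2 y0 ≤ vv (Sum.inl x0) := by
        have h := h20
        rw [addSingleEval, if_neg (by simp only [Sum.inl.injEq]; exact fun hh => hx01 hh.symm),
          add_zero] at h
        exact h
      have c2x1 : u2 x1 ≤ vv (Sum.inl x1) + (E+1) := by
        have h := h2i x1 (Ne.symm hx01)
        rw [addSingleEval, if_pos rfl] at h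
        exact h
      have c2i : ∀ i : Fin r, i ≠ x0 → i ≠ x1 → u2 i ≤ vv (Sum.inl i) := by
        intro i hi0 hi1
        have h := h2i i hi0
        rw [addSingleEval, if_neg (by simp only [Sum.inl.injEq]; exact fun hh => hi1 hh.symm),
          add_zero] at h
        exact h
      have c2j : ∀ j : Fin s, j ≠ y0 → v2 j ≤ vv (Sum.inr j) := by
        intro j hj
        have h := h2j j hj
        rw [addSingleEval, if_neg (by simp), add_zero] at h
        exact h
      have c1x1 : u1 x1 ≤ vv (Sum.inl x1) := by
        have h := h1i x1 (Ne.symm hx01)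
        rw [addSingleEval, if_neg (by simp), add_zero] at h
        exact h
      have c1i : ∀ i : Fin r, i ≠ x0 → i ≠ x1 → u1 i ≤ vv (Sum.inl i) := by
        intro i hi0 _
        have h := h1i i hi0
        rw [addSingleEval, if_neg (by simp), add_zero] at h
        exact h
      obtain ⟨ρ, hρ⟩ : ∃ ρ : Fin r →₀ ℕ, ∀ i : Fin r,
          ρ i = if i = x0 then 0 else if i = x1 then 0 else vv (Sum.inl i) := by
        refine ⟨((Finsupp.comapDomain Sum.inl vv
          Sum.inl_injective.injOn).erase x0).erase x1, fun i => ?_⟩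
        by_cases hi1 : i = x1
        · rw [hi1, if_neg (fun h => hx01 h.symm), if_pos rfl]
          exact Finsupp.erase_same
        · rw [Finsupp.erase_ne hi1]
          by_cases hi0 : i = x0
          · rw [hi0, if_pos rfl]
            exact Finsupp.erase_same
          · rw [if_neg hi0, if_neg hi1, Finsupp.erase_ne hi0]
            exact Finsupp.comapDomain_apply _ _ _ _
      have hhat : ∀ (a0 a1 : ℕ) (i : Fin r),
          (ρ + Finsupp.single x0 a0 + Finsupp.single x1 a1) i
            = if i = x0 then a0 else if i = x1 then a1 else vv (Sum.inl i) := by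
        intro a0 a1 i
        rw [triEval, hρ]
        by_cases hi0 : i = x0
        · subst hi0
          simp [Ne.symm hx01]
        · by_cases hi1 : i = x1
          · subst hi1
            simp [hx01, Ne.symm hi0, hi0]
          · simp [hi0, hi1, Ne.symm hi0, Ne.symm hi1]
      have hu2hat : monomial (ρ + Finsupp.single x0 (u2 x0)
          + Finsupp.single x1 (vv (Sum.inl x1) + E + 1)) (1:k) ∈ I^n := by
        apply mono_mem_of_le hu2
        rw [Finsupp.le_def]
        intro i
        rw [hhat]
        by_cases hi0 : i = x0
        · subst hi0; rw [if_pos rfl]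
        · by_cases hi1 : i = x1
          · subst hi1
            rw [if_neg hi0, if_pos rfl]
            omega
          · rw [if_neg hi0, if_neg hi1]
            exact c2i i hi0 hi1
      have hu1hat : monomial (ρ + Finsupp.single x0 (u1 x0)
          + Finsupp.single x1 (vv (Sum.inl x1) + E)) (1:k) ∈ I^n := by
        apply mono_mem_of_le hu1
        rw [Finsupp.le_def]
        intro i
        rw [hhat]
        by_cases hi0 : i = x0
        · subst hi0; rw [if_pos rfl]
        · by_cases hi1 : i = x1
          · subst hi1
            rw [if_neg hi0, if_pos rfl]
            omega
          · rw [if_neg hi0, if_neg hi1]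
            exact c1i i hi0 hi1
      have hstep := stepdown (I^n) x0 x1 hdag ρ (u1 x0) (u1 x0) (u2 x0)
        (vv (Sum.inl x1) + E) (by omega) hu1hat hu2hat
      refine Tmpr _ (ρ + Finsupp.single x0 (u2 x0) + Finsupp.single x1 (vv (Sum.inl x1) + E))
        v2 hstep hv2 ?_ ?_ ?_
      · rw [hhat, addSingleEval, if_pos rfl,
          if_neg (by simp only [Sum.inl.injEq]; exact fun h => hx01 h.symm)]
        omega
      · intro i hi0
        rw [hhat, addSingleEval]
        by_cases hi1 : i = x1
        · subst hi1
          rw [if_neg hi0, if_pos rfl, if_pos rfl]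
        · rw [if_neg hi0, if_neg hi1,
            if_neg (by simp only [Sum.inl.injEq]; exact fun h => hi1 h.symm)]
          omega
      · intro j hj
        rw [addSingleEval, if_neg (by simp)]
        have := c2j j hj
        omega
    · -- reduce v1 at y1; left disjunct
      left
      have hdag := dagger J hJrad n hdJ y0 y1 hy0 hy1
      have c10 : u1 x0 + v1 y0 ≤ vv (Sum.inl x0) := by
        have h := h10
        rw [addSingleEval, if_neg (by simp), add_zero] at h
        exact h
      have c1y1 : v1 y1 ≤ vv (Sum.inr y1) + (E+1) := by
        have h := h1j y1 (Ne.symm hy01)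
        rw [addSingleEval, if_pos rfl] at h
        exact h
      have c1j : ∀ j : Fin s, j ≠ y0 → j ≠ y1 → v1 j ≤ vv (Sum.inr j) := by
        intro j hj0 hj1
        have h := h1j j hj0
        rw [addSingleEval, if_neg (by simp only [Sum.inr.injEq]; exact fun hh => hj1 hh.symm),
          add_zero] at h
        exact h
      have c1i : ∀ i : Fin r, i ≠ x0 → u1 i ≤ vv (Sum.inl i) := by
        intro i hi
        have h := h1i i hi
        rw [addSingleEval, if_neg (by simp), add_zero] at h
        exact h
      have c2y1 : v2 y1 ≤ vv (Sum.inr y1) := by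
        have h := h2j y1 (Ne.symm hy01)
        rw [addSingleEval, if_neg (by simp), add_zero] at h
        exact h
      have c2j : ∀ j : Fin s, j ≠ y0 → j ≠ y1 → v2 j ≤ vv (Sum.inr j) := by
        intro j hj0 _
        have h := h2j j hj0
        rw [addSingleEval, if_neg (by simp), add_zero] at h
        exact h
      obtain ⟨ρ, hρ⟩ : ∃ ρ : Fin s →₀ ℕ, ∀ j : Fin s,
          ρ j = if j = y0 then 0 else if j = y1 then 0 else vv (Sum.inr j) := by
        refine ⟨((Finsupp.comapDomain Sum.inr vv
          Sum.inr_injective.injOn).erase y0).erase y1, fun j => ?_⟩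
        by_cases hj1 : j = y1
        · rw [hj1, if_neg (fun h => hy01 h.symm), if_pos rfl]
          exact Finsupp.erase_same
        · rw [Finsupp.erase_ne hj1]
          by_cases hj0 : j = y0
          · rw [hj0, if_pos rfl]
            exact Finsupp.erase_same
          · rw [if_neg hj0, if_neg hj1, Finsupp.erase_ne hj0]
            exact Finsupp.comapDomain_apply _ _ _ _
      have hhat : ∀ (a0 a1 : ℕ) (j : Fin s),
          (ρ + Finsupp.single y0 a0 + Finsupp.single y1 a1) j
            = if j = y0 then a0 else if j = y1 then a1 else vv (Sum.inr j) := by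
        intro a0 a1 j
        rw [triEval, hρ]
        by_cases hj0 : j = y0
        · subst hj0
          simp [Ne.symm hy01]
        · by_cases hj1 : j = y1
          · subst hj1
            simp [hy01, Ne.symm hj0, hj0]
          · simp [hj0, hj1, Ne.symm hj0, Ne.symm hj1]
      have hv1hat : monomial (ρ + Finsupp.single y0 (v1 y0)
          + Finsupp.single y1 (vv (Sum.inr y1) + E + 1)) (1:k) ∈ J^n := by
        apply mono_mem_of_le hv1
        rw [Finsupp.le_def]
        intro j
        rw [hhat]
        by_cases hj0 : j = y0
        · subst hj0; rw [if_pos rfl]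
        · by_cases hj1 : j = y1
          · subst hj1
            rw [if_neg hj0, if_pos rfl]
            omega
          · rw [if_neg hj0, if_neg hj1]
            exact c1j j hj0 hj1
      have hv2hat : monomial (ρ + Finsupp.single y0 (v2 y0)
          + Finsupp.single y1 (vv (Sum.inr y1) + E)) (1:k) ∈ J^n := by
        apply mono_mem_of_le hv2
        rw [Finsupp.le_def]
        intro j
        rw [hhat]
        by_cases hj0 : j = y0
        · subst hj0; rw [if_pos rfl]
        · by_cases hj1 : j = y1
          · subst hj1
            rw [if_neg hj0, if_pos rfl]
            omega
          · rw [if_neg hj0, if_neg hj1]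
            exact c2j j hj0 hj1
      have hstep := stepdown (J^n) y0 y1 hdag ρ (v2 y0) (v2 y0) (v1 y0)
        (vv (Sum.inr y1) + E) (by omega) hv2hat hv1hat
      refine Tmpr _ u1 (ρ + Finsupp.single y0 (v1 y0) + Finsupp.single y1 (vv (Sum.inr y1) + E))
        hu1 hstep ?_ ?_ ?_
      · rw [hhat, addSingleEval, if_pos rfl, if_neg (by simp)]
        omega
      · intro i hi
        rw [addSingleEval, if_neg (by simp)]
        have := c1i i hi
        omega
      · intro j hj0
        rw [hhat, addSingleEval]
        by_cases hj1 : j = y1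
        · subst hj1
          rw [if_neg hj0, if_pos rfl, if_pos rfl]
        · rw [if_neg hj0, if_neg hj1,
            if_neg (by simp only [Sum.inr.injEq]; exact fun h => hj1 h.symm)]
          omega
  -- main colon statement
  have main : ∀ p : MvPolynomial (Fin r ⊕ Fin s) k,
      (X (Sum.inl x1) - X (Sum.inr y1)) * p ∈
        M0 ⊔ Ideal.span {X (Sum.inl x0) - X (Sum.inr y0)} →
      p ∈ M0 ⊔ Ideal.span {X (Sum.inl x0) - X (Sum.inr y0)} := by
    intro p hp
    rw [memL_iff x0 y0 M0] at hp ⊢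
    rw [map_mul] at hp
    have hv : rename (collapseFn x0 y0)
          (X (Sum.inl x1) - X (Sum.inr y1) : MvPolynomial (Fin r ⊕ Fin s) k)
        = (X (Sum.inl x1) - X (Sum.inr y1) : MvPolynomial (Fin r ⊕ Fin s) k) := by
      rw [map_sub, rename_X, rename_X]
      have e1 : collapseFn x0 y0 (Sum.inl x1) = Sum.inl x1 := rfl
      have e2 : collapseFn x0 y0 (Sum.inr y1) = Sum.inr y1 := by
        simp [collapseFn, Ne.symm hy01]
      rw [e1, e2]
    rw [hv, ← hN] at hp
    rw [← hN]
    have hfsup : ∀ d ∈ ((X (Sum.inl x1) - X (Sum.inr y1))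
        * rename (collapseFn x0 y0) p).support, d ∈ T := by
      intro d hd
      exact hMonQN _ hp d hd
    have hall := lemmaB hab T hUp hP (rename (collapseFn x0 y0) p).support.card
      (rename (collapseFn x0 y0) p) le_rfl hfsup
    exact mem_of_forall_support (fun d hd => hall d hd)
  -- conclude regularity
  intro z w hzw
  obtain ⟨f, rfl⟩ := Ideal.Quotient.mk_surjective z
  obtain ⟨g, rfl⟩ := Ideal.Quotient.mk_surjective w
  have hzw' : ((X (Sum.inl x1) - X (Sum.inr y1) : MvPolynomial (Fin r ⊕ Fin s) k)) •
        Ideal.Quotient.mk (M0 ⊔ Ideal.span {X (Sum.inl x0) - X (Sum.inr y0)}) f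
      = ((X (Sum.inl x1) - X (Sum.inr y1) : MvPolynomial (Fin r ⊕ Fin s) k)) •
        Ideal.Quotient.mk (M0 ⊔ Ideal.span {X (Sum.inl x0) - X (Sum.inr y0)}) g := hzw
  rw [← Ideal.Quotient.mk_eq_mk, ← Ideal.Quotient.mk_eq_mk, ← Submodule.Quotient.mk_smul,
    ← Submodule.Quotient.mk_smul, smul_eq_mul, smul_eq_mul, Ideal.Quotient.mk_eq_mk,
    Ideal.Quotient.mk_eq_mk, Ideal.Quotient.eq, ← mul_sub] at hzw'
  exact Ideal.Quotient.eq.mpr (main _ hzw')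

theorem stmt10 {k : Type*} [Field k] {r s : ℕ} (hr : 3 ≤ r) (hs : 3 ≤ s)
    (I : Ideal (MvPolynomial (Fin r) k)) (J : Ideal (MvPolynomial (Fin s) k))
    (hI1 : I ≠ ⊤) (hIm : IsMonomialIdeal I)
    (hJ1 : J ≠ ⊤) (hJm : IsMonomialIdeal J)
    (hIrad : ∀ i : Fin r, 2 ≤ (i : ℕ) → X i ∈ I.radical)
    (hJrad : ∀ j : Fin s, 2 ≤ (j : ℕ) → X j ∈ J.radical)
    (n : ℕ) (hn : 1 ≤ n)
    (hdepth : 0 < polyDepth (I ^ n) ∨ 0 < polyDepth (J ^ n)) :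
    IsSMulRegular
      (MvPolynomial (Fin r ⊕ Fin s) k ⧸
        ((extA (s := s) I * extB (r := r) J) ^ n ⊔
          Ideal.span {X (Sum.inl (⟨0, by omega⟩ : Fin r)) - X (Sum.inr (⟨0, by omega⟩ : Fin s))}))
      (X (Sum.inl (⟨1, by omega⟩ : Fin r)) - X (Sum.inr (⟨1, by omega⟩ : Fin s))
        : MvPolynomial (Fin r ⊕ Fin s) k) := by
  exact stmt10main hr hs I J hI1 hIm hJ1 hJm hIrad hJrad n hn hdepth
    ⟨0, by omega⟩ ⟨1, by omega⟩ ⟨0, by omega⟩ ⟨1, by omega⟩ rfl rfl rfl rfl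
end

section
/- Let $A$ be a commutative Noetherian ring, $I \subseteq A$ an ideal, $y$ an element and $d \geq 1$ such that $y^d$ is a non-zerodivisor appropriately, and suppose $P = (I, x-y) : f$ for some $f$, with $J = y^d J'$. Then $P = (y^d I, x - y) : y^d f$; consequently if $\mathfrak{p} \in \operatorname{Ass}(I)$ with $P = \mathfrak{p} + (x-y)$ and $J \subseteq (y)$, then $P \in \operatorname{Ass}(y^d I, x-y)$. -/
open MvPolynomial

private lemma aux_sub_prime {k : Type*} [Field k] {r s : ℕ} (i : Fin r) (j : Fin s) :
    Prime ((X (Sum.inl i) - X (Sum.inr j) : MvPolynomial (Fin r ⊕ Fin s) k)) ∧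
    ¬ (X (Sum.inl i) - X (Sum.inr j) : MvPolynomial (Fin r ⊕ Fin s) k) ∣ X (Sum.inr j) := by
  set p : MvPolynomial (Fin r ⊕ Fin s) k := X (Sum.inl i) - X (Sum.inr j) with hp
  have hne : p ≠ 0 := by
    intro h
    exact Sum.inl_ne_inr (X_injective (sub_eq_zero.mp h))
  set σ0 : MvPolynomial (Fin r ⊕ Fin s) k →ₐ[k] MvPolynomial (Fin r ⊕ Fin s) k :=
    aeval (fun v => if v = Sum.inr j then X (Sum.inl i) else X v) with hσ0
  have hx : σ0 (X (Sum.inl i)) = X (Sum.inl i) := by simp [hσ0]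
  have hy : σ0 (X (Sum.inr j)) = X (Sum.inl i) := by simp [hσ0]
  have hp0 : σ0 p = 0 := by rw [hp, map_sub, hx, hy, sub_self]
  have hcomp : (Ideal.Quotient.mk (Ideal.span {p})).comp σ0.toRingHom
      = Ideal.Quotient.mk (Ideal.span {p}) := by
    apply MvPolynomial.ringHom_ext
    · intro a; simp [hσ0]
    · intro v
      by_cases hv : v = Sum.inr j
      · subst hv
        simp only [RingHom.comp_apply, AlgHom.toRingHom_eq_coe, RingHom.coe_coe, hσ0,
          aeval_X, if_pos rfl]
        rw [Ideal.Quotient.eq]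
        exact Ideal.subset_span rfl
      · simp [hσ0, hv]
  have hker : Ideal.span {p} = RingHom.ker σ0.toRingHom := by
    apply le_antisymm
    · rw [Ideal.span_le, Set.singleton_subset_iff]
      exact hp0
    · intro g hg
      have h1 : Ideal.Quotient.mk (Ideal.span {p}) (σ0 g)
          = Ideal.Quotient.mk (Ideal.span {p}) g := DFunLike.congr_fun hcomp g
      rw [RingHom.mem_ker] at hg
      rw [show σ0.toRingHom g = σ0 g from rfl] at hg
      rw [hg, map_zero] at h1
      exact Ideal.Quotient.eq_zero_iff_mem.mp h1.symm
  haveI : (Ideal.span {p}).IsPrime := by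
    rw [hker]; exact RingHom.ker_isPrime _
  refine ⟨(Ideal.span_singleton_prime hne).mp this, ?_⟩
  intro hdvd
  have hm : (X (Sum.inr j) : MvPolynomial (Fin r ⊕ Fin s) k) ∈ Ideal.span {p} :=
    Ideal.mem_span_singleton.mpr hdvd
  rw [hker, RingHom.mem_ker] at hm
  rw [show σ0.toRingHom (X (Sum.inr j)) = σ0 (X (Sum.inr j)) from rfl, hy] at hm
  exact X_ne_zero _ hm

set_option synthInstance.maxHeartbeats 1000000 in
set_option maxHeartbeats 1000000 in
private lemma aux_P_prime {k : Type*} [Field k] {r s : ℕ} (i : Fin r) (j : Fin s)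
    (𝔭 : Ideal (MvPolynomial (Fin r) k)) (h𝔭 : 𝔭.IsPrime) :
    (extA (s := s) 𝔭 ⊔ Ideal.span {X (Sum.inl i) - X (Sum.inr j)}).IsPrime := by
  haveI := h𝔭
  set P' : Ideal (MvPolynomial (Fin r ⊕ Fin s) k) :=
    extA (s := s) 𝔭 ⊔ Ideal.span {X (Sum.inl i) - X (Sum.inr j)} with hP'
  set Φ : MvPolynomial (Fin r ⊕ Fin s) k →ₐ[k] MvPolynomial (Fin s) (MvPolynomial (Fin r) k ⧸ 𝔭) :=
    aeval (Sum.elim (fun a => C (Ideal.Quotient.mk 𝔭 (X a)))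
      (fun b => if b = j then C (Ideal.Quotient.mk 𝔭 (X i)) else X b)) with hΦ
  -- the section
  set q : MvPolynomial (Fin r) k →+* MvPolynomial (Fin r ⊕ Fin s) k ⧸ P' :=
    (Ideal.Quotient.mk P').comp
      ((rename (Sum.inl (β := Fin s)) : MvPolynomial (Fin r) k →ₐ[k] MvPolynomial (Fin r ⊕ Fin s) k) :
        MvPolynomial (Fin r) k →+* MvPolynomial (Fin r ⊕ Fin s) k) with hq
  have h0 : ∀ p ∈ 𝔭, q p = 0 := by
    intro p hp
    refine Ideal.Quotient.eq_zero_iff_mem.mpr ?_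
    exact Ideal.mem_sup_left (Ideal.mem_map_of_mem _ hp)
  set qbar := Ideal.Quotient.lift 𝔭 q h0 with hqbar
  set ψ : MvPolynomial (Fin s) (MvPolynomial (Fin r) k ⧸ 𝔭) →+* MvPolynomial (Fin r ⊕ Fin s) k ⧸ P' :=
    eval₂Hom qbar (fun b => Ideal.Quotient.mk P' (X (Sum.inr b))) with hψ
  have hcomp : ψ.comp Φ.toRingHom = Ideal.Quotient.mk P' := by
    apply MvPolynomial.ringHom_ext
    · intro a
      simp [hΦ, hψ, hq, hqbar, MvPolynomial.algebraMap_apply,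
        IsScalarTower.algebraMap_apply k (MvPolynomial (Fin r) k)
          (MvPolynomial (Fin r) k ⧸ 𝔭), Ideal.Quotient.algebraMap_eq,
        Ideal.Quotient.lift_mk, MvPolynomial.algebraMap_eq]
    · intro v
      cases v with
      | inl a => simp [hΦ, hψ, hq, hqbar, Ideal.Quotient.lift_mk]
      | inr b =>
        by_cases hb : b = j
        · subst hb
          simp only [RingHom.comp_apply, AlgHom.toRingHom_eq_coe, RingHom.coe_coe, hΦ, aeval_X,
            Sum.elim_inr, eq_self_iff_true, if_true, hψ, eval₂Hom_C, hqbar,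
            Ideal.Quotient.lift_mk, hq, rename_X]
          rw [Ideal.Quotient.eq]
          exact Ideal.mem_sup_right (Ideal.subset_span rfl)
        · simp [hΦ, hψ, hb]
  have haux : ∀ p : MvPolynomial (Fin r) k,
      Φ (rename Sum.inl p) = C (Ideal.Quotient.mk 𝔭 p) := by
    intro p
    induction p using MvPolynomial.induction_on with
    | C a =>
      rw [rename_C, show (C a : MvPolynomial (Fin r ⊕ Fin s) k) = algebraMap k _ a from rfl,
        Φ.commutes, MvPolynomial.algebraMap_apply,
        IsScalarTower.algebraMap_apply k (MvPolynomial (Fin r) k)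
          (MvPolynomial (Fin r) k ⧸ 𝔭), Ideal.Quotient.algebraMap_eq,
        MvPolynomial.algebraMap_eq]
    | add p q hp hq => simp only [map_add, hp, hq]
    | mul_X p a hp => simp only [map_mul, hp, rename_X]; simp [hΦ]
  have hker : P' = RingHom.ker Φ.toRingHom := by
    apply le_antisymm
    · rw [hP', sup_le_iff]
      constructor
      · rw [extA, Ideal.map_le_iff_le_comap]
        intro p hp
        rw [Ideal.mem_comap, RingHom.mem_ker]
        show Φ (rename Sum.inl p) = 0
        rw [haux p, Ideal.Quotient.eq_zero_iff_mem.mpr hp, map_zero]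
      · rw [Ideal.span_le, Set.singleton_subset_iff]
        show Φ (X (Sum.inl i) - X (Sum.inr j)) = 0
        simp [hΦ]
    · intro g hg
      rw [RingHom.mem_ker] at hg
      have h1 : ψ (Φ g) = Ideal.Quotient.mk P' g := DFunLike.congr_fun hcomp g
      rw [show Φ.toRingHom g = Φ g from rfl] at hg
      rw [hg, map_zero] at h1
      exact Ideal.Quotient.eq_zero_iff_mem.mp h1.symm
  rw [hker]
  exact RingHom.ker_isPrime _

private lemma aux_ann {R : Type*} [CommRing R] (J : Ideal R) (m : R) :
    (Submodule.span R {Ideal.Quotient.mk J m}).annihilator = J.colon (Ideal.span {m}) := by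
  ext g
  rw [Submodule.mem_annihilator_span_singleton, Ideal.mem_colon_span_singleton,
    Algebra.smul_def, Ideal.Quotient.algebraMap_eq, ← map_mul,
    Ideal.Quotient.eq_zero_iff_mem]

theorem stmt16 {k : Type*} [Field k] {r s : ℕ}
    (I : Ideal (MvPolynomial (Fin r) k)) (hIh : IsHomogIdeal I)
    (i : Fin r) (j : Fin s) (d : ℕ) (hd : 1 ≤ d)
    (𝔭 : Ideal (MvPolynomial (Fin r) k))
    (h𝔭 : 𝔭 ∈ associatedPrimes (MvPolynomial (Fin r) k) (MvPolynomial (Fin r) k ⧸ I))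
    (P : Ideal (MvPolynomial (Fin r ⊕ Fin s) k))
    (f : MvPolynomial (Fin r ⊕ Fin s) k)
    (hP : P = extA (s := s) 𝔭 ⊔ Ideal.span {X (Sum.inl i) - X (Sum.inr j)})
    (hPf : P = (extA (s := s) I ⊔
        Ideal.span {X (Sum.inl i) - X (Sum.inr j)}).colon (Ideal.span {f})) :
    P = (Ideal.span {(X (Sum.inr j) : MvPolynomial (Fin r ⊕ Fin s) k) ^ d} * extA (s := s) I ⊔
          Ideal.span {X (Sum.inl i) - X (Sum.inr j)}).colon
        (Ideal.span {(X (Sum.inr j) : MvPolynomial (Fin r ⊕ Fin s) k) ^ d * f}) ∧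
      P ∈ associatedPrimes (MvPolynomial (Fin r ⊕ Fin s) k)
        (MvPolynomial (Fin r ⊕ Fin s) k ⧸
          (Ideal.span {(X (Sum.inr j) : MvPolynomial (Fin r ⊕ Fin s) k) ^ d} * extA (s := s) I ⊔
            Ideal.span {X (Sum.inl i) - X (Sum.inr j)})) := by
  obtain ⟨hprime, hndvd1⟩ := aux_sub_prime (k := k) i j
  have hndvd : ¬ (X (Sum.inl i) - X (Sum.inr j) : MvPolynomial (Fin r ⊕ Fin s) k) ∣
      (X (Sum.inr j) : MvPolynomial (Fin r ⊕ Fin s) k) ^ d :=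
    fun h => hndvd1 (hprime.dvd_of_dvd_pow h)
  set y : MvPolynomial (Fin r ⊕ Fin s) k := X (Sum.inr j) with hky
  set pxy : MvPolynomial (Fin r ⊕ Fin s) k := X (Sum.inl i) - X (Sum.inr j) with hpxy
  set K : Ideal (MvPolynomial (Fin r ⊕ Fin s) k) :=
    extA (s := s) I ⊔ Ideal.span {pxy} with hK
  set L : Ideal (MvPolynomial (Fin r ⊕ Fin s) k) :=
    Ideal.span {y ^ d} * extA (s := s) I ⊔ Ideal.span {pxy} with hL
  have hcancel : ∀ h : MvPolynomial (Fin r ⊕ Fin s) k, y ^ d * h ∈ L → h ∈ K := by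
    intro h hh
    rw [hL] at hh
    rw [Submodule.mem_sup] at hh
    obtain ⟨u, hu, v, hv, huv⟩ := hh
    obtain ⟨a, ha, hau⟩ := Ideal.mem_span_singleton_mul.mp hu
    have hveq : y ^ d * (h - a) = v := by rw [← hau] at huv; linear_combination -huv
    have hdvd : pxy ∣ y ^ d * (h - a) := by
      rw [hveq]; exact Ideal.mem_span_singleton.mp hv
    have hdvd2 : pxy ∣ h - a := (hprime.dvd_mul.mp hdvd).resolve_left hndvd
    have heq : h = a + (h - a) := by ring
    rw [hK, heq]
    exact Ideal.add_mem _ (Ideal.mem_sup_left ha)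
      (Ideal.mem_sup_right (Ideal.mem_span_singleton.mpr hdvd2))
  have part1 : P = L.colon (Ideal.span {y ^ d * f}) := by
    ext g
    rw [Ideal.mem_colon_span_singleton]
    constructor
    · intro hg
      have hgf : g * f ∈ K := by
        rw [hPf] at hg
        exact Ideal.mem_colon_span_singleton.mp hg
      rw [hK, Submodule.mem_sup] at hgf
      obtain ⟨u, hu, v, hv, huv⟩ := hgf
      have heq : g * (y ^ d * f) = y ^ d * u + y ^ d * v := by
        rw [show y ^ d * u + y ^ d * v = y ^ d * (u + v) by ring, huv]; ring
      rw [heq, hL]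
      exact Ideal.add_mem _
        (Ideal.mem_sup_left (Ideal.mul_mem_mul (Ideal.mem_span_singleton_self _) hu))
        (Ideal.mem_sup_right (Ideal.mul_mem_left _ _ hv))
    · intro hg
      have h1 : y ^ d * (g * f) ∈ L := by
        rw [show y ^ d * (g * f) = g * (y ^ d * f) by ring]
        exact hg
      have h2 : g * f ∈ K := hcancel _ h1
      rw [hPf]
      exact Ideal.mem_colon_span_singleton.mpr h2
  have hPp : P.IsPrime := by
    rw [hP]
    exact aux_P_prime i j 𝔭 (AssociatedPrimes.mem_iff.mp h𝔭).1
  refine ⟨part1, ?_⟩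
  exact isAssociatedPrime_iff.mpr ⟨hPp, ⟨Ideal.Quotient.mk L (y ^ d * f), by rw [Submodule.bot_colon', aux_ann, ← part1]⟩⟩
end

section
/- Let $A = \mathbb{Q}[x,z]$ with $I = (x^2+1, z)$ and $B = \mathbb{Q}[y,t]$ with $J = (y^2+1, t)$, viewed in $R = \mathbb{Q}[x,z,y,t]$. Then $I$ and $J$ are prime ideals, the minimal primes of $I + J$ in $R$ are $(x^2+1, t, z, x-y)$ and $(x^2+1, t, z, x+y)$, and $\operatorname{Ass}(IJ, x-y) = \{(x^2+1, z, x-y),\ (y^2+1, t, x-y),\ (x^2+1, z, t, x-y)\}$. -/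
set_option linter.dupNamespace false
noncomputable section
namespace ST18

open Polynomial in

theorem irr_fq : Irreducible (X ^ 2 + 1 : ℚ[X]) := by
  have hd : (X ^ 2 + 1 : ℚ[X]).natDegree = 2 := by compute_degree!
  rw [Polynomial.irreducible_iff_roots_eq_zero_of_degree_le_three (by omega) (by omega)]
  rw [Multiset.eq_zero_iff_forall_notMem]
  intro a ha
  rw [Polynomial.mem_roots (by intro h; rw [h] at hd; simp at hd)] at ha
  have h2 := ha
  simp only [Polynomial.IsRoot, Polynomial.eval_add, Polynomial.eval_pow,
    Polynomial.eval_X, Polynomial.eval_one] at h2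
  nlinarith [sq_nonneg a]

def K : Type := AdjoinRoot (Polynomial.X ^ 2 + 1 : Polynomial ℚ)

instance : CommRing K := by unfold K; infer_instance
instance : Algebra ℚ K := by unfold K; infer_instance
instance : IsDomain K := by
  unfold K
  have : Fact (Irreducible (Polynomial.X ^ 2 + 1 : Polynomial ℚ)) := ⟨irr_fq⟩
  infer_instance

def ii : K := AdjoinRoot.root _

theorem ii_sq : ii ^ 2 + 1 = 0 := by
  have h := AdjoinRoot.mk_self (f := (Polynomial.X ^ 2 + 1 : Polynomial ℚ))
  rwa [map_add, map_pow, map_one, AdjoinRoot.mk_X] at h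

variable {R : Type*} [CommRing R]

theorem mem_of_sec {p : Ideal R} {S : Type*} [CommRing S] (θ : R →+* S) (σ : S →+* R ⧸ p)
    (h : ∀ r, σ (θ r) = Ideal.Quotient.mk p r) {r : R} (hr : θ r = 0) : r ∈ p := by
  rw [← Ideal.Quotient.eq_zero_iff_mem, ← h r, hr, map_zero]

theorem prime_of_sec {p : Ideal R} {S : Type*} [CommRing S] [IsDomain S] (θ : R →+* S)
    (hk : ∀ a ∈ p, θ a = 0) (σ : S →+* R ⧸ p)
    (h : ∀ r, σ (θ r) = Ideal.Quotient.mk p r) : p.IsPrime := by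
  rw [← Ideal.Quotient.isDomain_iff_prime]
  refine Function.Injective.isDomain (Ideal.Quotient.lift p θ hk) ?_
  intro a b hab
  obtain ⟨a, rfl⟩ := Ideal.Quotient.mk_surjective a
  obtain ⟨b, rfl⟩ := Ideal.Quotient.mk_surjective b
  rw [Ideal.Quotient.lift_mk, Ideal.Quotient.lift_mk] at hab
  rw [← h a, ← h b, hab]

theorem mem_span2 {a b g : R} (c1 c2 : R) (h : g = c1 * a + c2 * b) :
    g ∈ Ideal.span {a, b} := by
  subst h
  exact add_mem (Ideal.mul_mem_left _ _ (Ideal.subset_span (by simp)))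
    (Ideal.mul_mem_left _ _ (Ideal.subset_span (by simp)))

theorem mem_span3 {a b c g : R} (c1 c2 c3 : R) (h : g = c1 * a + c2 * b + c3 * c) :
    g ∈ Ideal.span {a, b, c} := by
  subst h
  exact add_mem (add_mem (Ideal.mul_mem_left _ _ (Ideal.subset_span (by simp)))
    (Ideal.mul_mem_left _ _ (Ideal.subset_span (by simp))))
    (Ideal.mul_mem_left _ _ (Ideal.subset_span (by simp)))

theorem mem_span4 {a b c d g : R} (c1 c2 c3 c4 : R) (h : g = c1 * a + c2 * b + c3 * c + c4 * d) :
    g ∈ Ideal.span {a, b, c, d} := by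
  subst h
  exact add_mem (add_mem (add_mem (Ideal.mul_mem_left _ _ (Ideal.subset_span (by simp)))
    (Ideal.mul_mem_left _ _ (Ideal.subset_span (by simp))))
    (Ideal.mul_mem_left _ _ (Ideal.subset_span (by simp))))
    (Ideal.mul_mem_left _ _ (Ideal.subset_span (by simp)))

theorem ass_subset_union [IsNoetherianRing R] {M : Type*} [AddCommGroup M] [Module R M] (M' : Submodule R M) :
    associatedPrimes R M ⊆ associatedPrimes R M' ∪ associatedPrimes R (M ⧸ M') := by
  rintro p hp
  obtain ⟨hp, x, hx⟩ := isAssociatedPrime_iff.mp hp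
  by_cases h : ∀ a : R, a • x ∈ M' → a • x = 0
  · right
    refine isAssociatedPrime_iff.mpr ⟨hp, Submodule.Quotient.mk x, ?_⟩
    ext r
    rw [hx, Submodule.mem_colon_singleton, Submodule.mem_colon_singleton, Submodule.mem_bot,
      Submodule.mem_bot, ← Submodule.Quotient.mk_smul, Submodule.Quotient.mk_eq_zero]
    exact ⟨fun hr => by rw [hr]; exact zero_mem _, fun hr => h r hr⟩
  · left
    push_neg at h
    obtain ⟨a, haM, ha0⟩ := h
    refine isAssociatedPrime_iff.mpr ⟨hp, ⟨a • x, haM⟩, ?_⟩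
    ext r
    rw [Submodule.mem_colon_singleton, Submodule.mem_bot]
    have hcoe : (r • (⟨a • x, haM⟩ : M') = 0) ↔ r • a • x = 0 := by
      rw [Subtype.ext_iff]; rfl
    rw [hcoe, smul_smul]
    constructor
    · intro hr
      rw [mul_comm, mul_smul]
      rw [hx, Submodule.mem_colon_singleton, Submodule.mem_bot] at hr
      rw [hr, smul_zero]
    · intro hr
      have hmem : r * a ∈ p := by
        rw [hx, Submodule.mem_colon_singleton, Submodule.mem_bot]; exact hr
      rcases hp.mem_or_mem hmem with h1 | h2
      · exact h1
      · exact absurd (by rw [hx, Submodule.mem_colon_singleton, Submodule.mem_bot] at h2; exact h2) ha0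

theorem ass_span_singleton {M : Type*} [AddCommGroup M] [Module R M] (x : M) :
    associatedPrimes R (↥(Submodule.span R {x})) =
      associatedPrimes R (R ⧸ (Submodule.span R {x}).annihilator) := by
  have hker : LinearMap.ker (LinearMap.toSpanSingleton R M x) =
      (Submodule.span R {x}).annihilator := by
    ext r
    rw [LinearMap.mem_ker, Submodule.mem_annihilator_span_singleton,
      LinearMap.toSpanSingleton_apply]
  have e1 : (R ⧸ (Submodule.span R {x}).annihilator) ≃ₗ[R]
      ↥(LinearMap.range (LinearMap.toSpanSingleton R M x)) :=
    (Submodule.quotEquivOfEq _ _ hker.symm).trans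
      (LinearMap.toSpanSingleton R M x).quotKerEquivRange
  have e2 : ↥(LinearMap.range (LinearMap.toSpanSingleton R M x)) ≃ₗ[R]
      ↥(Submodule.span R {x}) :=
    LinearEquiv.ofEq _ _ (LinearMap.span_singleton_eq_range R M x).symm
  exact LinearEquiv.AssociatedPrimes.eq ((e1.trans e2).symm)

open MvPolynomial

abbrev R4 : Type := MvPolynomial (Fin 4) ℚ

def vx : R4 := X 0
def vz : R4 := X 1
def vy : R4 := X 2
def vt : R4 := X 3

def pI : Ideal R4 := Ideal.span {vx ^ 2 + 1, vz}
def pJ : Ideal R4 := Ideal.span {vy ^ 2 + 1, vt}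
def pP2 : Ideal R4 := Ideal.span {vx ^ 2 + 1, vt, vz, vx + vy}
def pQ1 : Ideal R4 := Ideal.span {vx ^ 2 + 1, vz, vx - vy}
def pQ2 : Ideal R4 := Ideal.span {vy ^ 2 + 1, vt, vx - vy}
def pQ3 : Ideal R4 := Ideal.span {vx ^ 2 + 1, vz, vt, vx - vy}
def NN : Ideal R4 := pI * pJ ⊔ Ideal.span {vx - vy}
def a1 : Ideal R4 := Ideal.span {vx ^ 2 + 1, vz * vt, vx - vy}

theorem mv_ext {S : Type*} [CommSemiring S] (f g : R4 →+* S)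
    (h : ∀ i, f (X i) = g (X i)) : f = g :=
  MvPolynomial.ringHom_ext
    (fun r => RingHom.congr_fun (Subsingleton.elim
      (f.comp (MvPolynomial.C : ℚ →+* R4)) (g.comp (MvPolynomial.C : ℚ →+* R4))) r) h

theorem mk_sq {p : Ideal R4} {w : R4} (h : w ^ 2 + 1 ∈ p) :
    Polynomial.eval₂ (algebraMap ℚ (R4 ⧸ p)) (Ideal.Quotient.mk p w)
      (Polynomial.X ^ 2 + 1) = 0 := by
  rw [Polynomial.eval₂_add, Polynomial.eval₂_pow, Polynomial.eval₂_X, Polynomial.eval₂_one]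
  have h0 : Ideal.Quotient.mk p (w ^ 2 + 1) = 0 := Ideal.Quotient.eq_zero_iff_mem.mpr h
  rw [map_add, map_pow, map_one] at h0
  exact h0

/-- Section `K → R4 ⧸ p` sending the root to `mk w`. -/
def sK {p : Ideal R4} {w : R4} (h : w ^ 2 + 1 ∈ p) : K →+* R4 ⧸ p :=
  AdjoinRoot.lift (algebraMap ℚ (R4 ⧸ p)) (Ideal.Quotient.mk p w) (mk_sq h)

theorem sK_ii {p : Ideal R4} {w : R4} (h : w ^ 2 + 1 ∈ p) :
    sK h ii = Ideal.Quotient.mk p w :=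
  AdjoinRoot.lift_root _

theorem sK_C {p : Ideal R4} {w : R4} (h : w ^ 2 + 1 ∈ p) (a : ℚ) :
    sK h ((algebraMap ℚ K) a) = algebraMap ℚ (R4 ⧸ p) a := by
  have h2 : (algebraMap ℚ K) a = AdjoinRoot.of _ a := rfl
  rw [h2, sK]
  exact AdjoinRoot.lift_of (mk_sq h)

-- generator membership helpers
theorem g1I : vx ^ 2 + 1 ∈ pI := Ideal.subset_span (by simp)
theorem g2I : vz ∈ pI := Ideal.subset_span (by simp)
theorem g1J : vy ^ 2 + 1 ∈ pJ := Ideal.subset_span (by simp)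
theorem g2J : vt ∈ pJ := Ideal.subset_span (by simp)
theorem g1Q1 : vx ^ 2 + 1 ∈ pQ1 := Ideal.subset_span (by simp)
theorem g2Q1 : vz ∈ pQ1 := Ideal.subset_span (by simp)
theorem g3Q1 : vx - vy ∈ pQ1 := Ideal.subset_span (by simp)
theorem g1Q2 : vy ^ 2 + 1 ∈ pQ2 := Ideal.subset_span (by simp)
theorem g2Q2 : vt ∈ pQ2 := Ideal.subset_span (by simp)
theorem g3Q2 : vx - vy ∈ pQ2 := Ideal.subset_span (by simp)
theorem g1Q3 : vx ^ 2 + 1 ∈ pQ3 := Ideal.subset_span (by simp)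
theorem g2Q3 : vz ∈ pQ3 := Ideal.subset_span (by simp)
theorem g3Q3 : vt ∈ pQ3 := Ideal.subset_span (by simp)
theorem g4Q3 : vx - vy ∈ pQ3 := Ideal.subset_span (by simp)
theorem g1P2 : vx ^ 2 + 1 ∈ pP2 := Ideal.subset_span (by simp)
theorem g2P2 : vt ∈ pP2 := Ideal.subset_span (by simp)
theorem g3P2 : vz ∈ pP2 := Ideal.subset_span (by simp)
theorem g4P2 : vx + vy ∈ pP2 := Ideal.subset_span (by simp)


open Polynomial in
theorem Cii_sq : (Polynomial.C ii : Polynomial K) ^ 2 + 1 = 0 := by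
  rw [← map_pow, ← Polynomial.C_1, ← map_add, ii_sq, map_zero]

def thE : R4 →+* Polynomial K :=
  MvPolynomial.eval₂Hom (algebraMap ℚ (Polynomial K)) ![Polynomial.C ii, 0, Polynomial.C ii, Polynomial.X]

def sE : Polynomial K →+* R4 ⧸ pQ1 :=
  Polynomial.eval₂RingHom (sK g1Q1) (Ideal.Quotient.mk pQ1 vt)

theorem secE : ∀ r, sE (thE r) = Ideal.Quotient.mk pQ1 r := by
  intro r
  refine RingHom.congr_fun (mv_ext (sE.comp thE) (Ideal.Quotient.mk pQ1) ?_) r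
  intro i
  fin_cases i
  · simp [thE, sE, vx, sK_ii]
  · simp only [RingHom.comp_apply]
    simp [thE, sE]
    exact (Ideal.Quotient.eq_zero_iff_mem.mpr g2Q1).symm
  · simp only [RingHom.comp_apply]
    simp [thE, sE, sK_ii]
    rw [Ideal.Quotient.eq]
    exact g3Q1
  · simp [thE, sE, vt]

theorem thE_NN : ∀ a ∈ NN, thE a = 0 := by
  have h1 : NN ≤ RingHom.ker thE := by
    rw [NN, sup_le_iff]
    constructor
    · refine le_trans Ideal.mul_le_left ?_
      rw [pI, Ideal.span_le]
      rintro g hg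
      simp only [Set.mem_insert_iff, Set.mem_singleton_iff] at hg
      rcases hg with rfl | rfl <;>
        simp [RingHom.mem_ker, thE, vx, vz, Cii_sq]
    · rw [Ideal.span_le]
      rintro g hg
      simp only [Set.mem_singleton_iff] at hg
      subst hg
      simp [RingHom.mem_ker, thE, vx, vy]
  exact fun a ha => h1 ha

-- ### Block F : R4 ⧸ pQ2 ≅ K[z]
def thF : R4 →+* Polynomial K :=
  MvPolynomial.eval₂Hom (algebraMap ℚ (Polynomial K)) ![Polynomial.C ii, Polynomial.X, Polynomial.C ii, 0]

def sF : Polynomial K →+* R4 ⧸ pQ2 :=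
  Polynomial.eval₂RingHom (sK g1Q2) (Ideal.Quotient.mk pQ2 vz)

theorem secF : ∀ r, sF (thF r) = Ideal.Quotient.mk pQ2 r := by
  intro r
  refine RingHom.congr_fun (mv_ext (sF.comp thF) (Ideal.Quotient.mk pQ2) ?_) r
  intro i
  fin_cases i
  · simp only [RingHom.comp_apply]
    simp [thF, sF, sK_ii]
    rw [Ideal.Quotient.eq]
    simpa [vx, vy, neg_sub] using neg_mem g3Q2
  · simp [thF, sF, vz]
  · simp [thF, sF, vy, sK_ii]
  · simp only [RingHom.comp_apply]
    simp [thF, sF]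
    exact (Ideal.Quotient.eq_zero_iff_mem.mpr g2Q2).symm

theorem thF_NN : ∀ a ∈ NN, thF a = 0 := by
  have h1 : NN ≤ RingHom.ker thF := by
    rw [NN, sup_le_iff]
    constructor
    · refine le_trans Ideal.mul_le_right ?_
      rw [pJ, Ideal.span_le]
      rintro g hg
      simp only [Set.mem_insert_iff, Set.mem_singleton_iff] at hg
      rcases hg with rfl | rfl <;>
        simp [RingHom.mem_ker, thF, vy, vt, Cii_sq]
    · rw [Ideal.span_le]
      rintro g hg
      simp only [Set.mem_singleton_iff] at hg
      subst hg
      simp [RingHom.mem_ker, thF, vx, vy]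
  exact fun a ha => h1 ha

theorem thF_a1 : ∀ a ∈ a1, thF a = 0 := by
  have h1 : a1 ≤ RingHom.ker thF := by
    rw [a1, Ideal.span_le]
    rintro g hg
    simp only [Set.mem_insert_iff, Set.mem_singleton_iff] at hg
    rcases hg with rfl | rfl | rfl <;>
      simp [RingHom.mem_ker, thF, vx, vy, vz, vt, Cii_sq]
  exact fun a ha => h1 ha

theorem thF_Q2 : ∀ a ∈ pQ2, thF a = 0 := by
  have h1 : pQ2 ≤ RingHom.ker thF := by
    rw [pQ2, Ideal.span_le]
    rintro g hg
    simp only [Set.mem_insert_iff, Set.mem_singleton_iff] at hg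
    rcases hg with rfl | rfl | rfl <;>
      simp [RingHom.mem_ker, thF, vx, vy, vt, Cii_sq]
  exact fun a ha => h1 ha

theorem thE_Q1 : ∀ a ∈ pQ1, thE a = 0 := by
  have h1 : pQ1 ≤ RingHom.ker thE := by
    rw [pQ1, Ideal.span_le]
    rintro g hg
    simp only [Set.mem_insert_iff, Set.mem_singleton_iff] at hg
    rcases hg with rfl | rfl | rfl <;>
      simp [RingHom.mem_ker, thE, vx, vy, vz, Cii_sq]
  exact fun a ha => h1 ha

-- ### Block G : R4 ⧸ pQ3 ≅ K,  and H : R4 → ℚ[X]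
def thG : R4 →+* K :=
  MvPolynomial.eval₂Hom (algebraMap ℚ K) ![ii, 0, ii, 0]

def sG : K →+* R4 ⧸ pQ3 := sK g1Q3

theorem secG : ∀ r, sG (thG r) = Ideal.Quotient.mk pQ3 r := by
  intro r
  refine RingHom.congr_fun (mv_ext (sG.comp thG) (Ideal.Quotient.mk pQ3) ?_) r
  intro i
  fin_cases i
  · simp [thG, sG, vx, sK_ii]
  · simp only [RingHom.comp_apply]
    simp [thG, sG]
    exact (Ideal.Quotient.eq_zero_iff_mem.mpr g2Q3).symm
  · simp only [RingHom.comp_apply]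
    simp [thG, sG, sK_ii]
    rw [Ideal.Quotient.eq]
    exact g4Q3
  · simp only [RingHom.comp_apply]
    simp [thG, sG]
    exact (Ideal.Quotient.eq_zero_iff_mem.mpr g3Q3).symm

theorem thG_Q3 : ∀ a ∈ pQ3, thG a = 0 := by
  have h1 : pQ3 ≤ RingHom.ker thG := by
    rw [pQ3, Ideal.span_le]
    rintro g hg
    simp only [Set.mem_insert_iff, Set.mem_singleton_iff] at hg
    rcases hg with rfl | rfl | rfl | rfl <;>
      simp [RingHom.mem_ker, thG, vx, vy, vz, vt, ii_sq]
  exact fun a ha => h1 ha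

def thH : R4 →+* Polynomial ℚ :=
  MvPolynomial.eval₂Hom (algebraMap ℚ (Polynomial ℚ)) ![Polynomial.X, 0, Polynomial.X, 0]

theorem thG_eq_mk_thH (r : R4) :
    thG r = AdjoinRoot.mk (Polynomial.X ^ 2 + 1 : Polynomial ℚ) (thH r) := by
  refine RingHom.congr_fun (mv_ext thG ((AdjoinRoot.mk _).comp thH) ?_) r
  intro i
  show thG (X i) = AdjoinRoot.mk (Polynomial.X ^ 2 + 1 : Polynomial ℚ) (thH (X i))
  fin_cases i <;>
    simp [thG, thH, ii, AdjoinRoot.mk_X, MvPolynomial.eval₂Hom_X'] <;> rfl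

theorem thH_NN : ∀ a ∈ NN, thH a ∈ Ideal.span {(Polynomial.X ^ 2 + 1 : Polynomial ℚ) ^ 2} := by
  have hI : pI ≤ Ideal.comap thH (Ideal.span {(Polynomial.X ^ 2 + 1 : Polynomial ℚ)}) := by
    rw [pI, Ideal.span_le]
    rintro g hg
    simp only [Set.mem_insert_iff, Set.mem_singleton_iff] at hg
    rcases hg with rfl | rfl
    · simp only [SetLike.mem_coe, Ideal.mem_comap]
      have h : thH (vx ^ 2 + 1) = Polynomial.X ^ 2 + 1 := by simp [thH, vx]
      rw [h]; exact Ideal.subset_span rfl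
    · simp only [SetLike.mem_coe, Ideal.mem_comap]
      have h : thH vz = 0 := by simp [thH, vz]
      rw [h]; exact zero_mem _
  have hJ : pJ ≤ Ideal.comap thH (Ideal.span {(Polynomial.X ^ 2 + 1 : Polynomial ℚ)}) := by
    rw [pJ, Ideal.span_le]
    rintro g hg
    simp only [Set.mem_insert_iff, Set.mem_singleton_iff] at hg
    rcases hg with rfl | rfl
    · simp only [SetLike.mem_coe, Ideal.mem_comap]
      have h : thH (vy ^ 2 + 1) = Polynomial.X ^ 2 + 1 := by simp [thH, vy]
      rw [h]; exact Ideal.subset_span rfl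
    · simp only [SetLike.mem_coe, Ideal.mem_comap]
      have h : thH vt = 0 := by simp [thH, vt]
      rw [h]; exact zero_mem _
  have h1 : NN ≤ Ideal.comap thH (Ideal.span {(Polynomial.X ^ 2 + 1 : Polynomial ℚ) ^ 2}) := by
    rw [NN, sup_le_iff]
    constructor
    · rw [Ideal.mul_le]
      intro r hr s hs
      have hr' := hI hr
      have hs' := hJ hs
      rw [Ideal.mem_comap, Ideal.mem_span_singleton] at hr' hs' ⊢
      rw [map_mul, pow_two]
      exact mul_dvd_mul hr' hs'
    · rw [Ideal.span_le]
      rintro g hg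
      simp only [Set.mem_singleton_iff] at hg
      subst hg
      simp only [SetLike.mem_coe, Ideal.mem_comap, map_sub]
      have : thH vx = thH vy := by simp [thH, vx, vy]
      rw [this, sub_self]
      exact zero_mem _
  exact fun a ha => h1 ha

-- ### Blocks A, B : primality of pI, pJ ; D : pP2
theorem CiiM_sq : (MvPolynomial.C ii : MvPolynomial (Fin 2) K) ^ 2 + 1 = 0 := by
  rw [← map_pow, ← MvPolynomial.C_1, ← map_add, ii_sq, map_zero]

def thA : R4 →+* MvPolynomial (Fin 2) K :=
  MvPolynomial.eval₂Hom (algebraMap ℚ (MvPolynomial (Fin 2) K)) ![MvPolynomial.C ii, 0, X 0, X 1]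

def sA : MvPolynomial (Fin 2) K →+* R4 ⧸ pI :=
  MvPolynomial.eval₂Hom (sK g1I) ![Ideal.Quotient.mk pI vy, Ideal.Quotient.mk pI vt]

theorem secA : ∀ r, sA (thA r) = Ideal.Quotient.mk pI r := by
  intro r
  refine RingHom.congr_fun (mv_ext (sA.comp thA) (Ideal.Quotient.mk pI) ?_) r
  intro i
  show sA (thA (X i)) = Ideal.Quotient.mk pI (X i)
  fin_cases i
  · simp [thA, sA, vx, sK_ii, MvPolynomial.eval₂Hom_X']
  · simp [thA, sA, MvPolynomial.eval₂Hom_X']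
    exact (Ideal.Quotient.eq_zero_iff_mem.mpr g2I).symm
  · simp [thA, sA, vy, MvPolynomial.eval₂Hom_X']
  · simp [thA, sA, vt, MvPolynomial.eval₂Hom_X']

theorem thA_I : ∀ a ∈ pI, thA a = 0 := by
  have h1 : pI ≤ RingHom.ker thA := by
    rw [pI, Ideal.span_le]
    rintro g hg
    simp only [Set.mem_insert_iff, Set.mem_singleton_iff] at hg
    rcases hg with rfl | rfl <;>
      simp [RingHom.mem_ker, thA, vx, vz, CiiM_sq, MvPolynomial.eval₂Hom_X']
  exact fun a ha => h1 ha

def thB : R4 →+* MvPolynomial (Fin 2) K :=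
  MvPolynomial.eval₂Hom (algebraMap ℚ (MvPolynomial (Fin 2) K)) ![X 0, X 1, MvPolynomial.C ii, 0]

def sB : MvPolynomial (Fin 2) K →+* R4 ⧸ pJ :=
  MvPolynomial.eval₂Hom (sK g1J) ![Ideal.Quotient.mk pJ vx, Ideal.Quotient.mk pJ vz]

theorem secB : ∀ r, sB (thB r) = Ideal.Quotient.mk pJ r := by
  intro r
  refine RingHom.congr_fun (mv_ext (sB.comp thB) (Ideal.Quotient.mk pJ) ?_) r
  intro i
  show sB (thB (X i)) = Ideal.Quotient.mk pJ (X i)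
  fin_cases i
  · simp [thB, sB, vx, MvPolynomial.eval₂Hom_X']
  · simp [thB, sB, vz, MvPolynomial.eval₂Hom_X']
  · simp [thB, sB, vy, sK_ii, MvPolynomial.eval₂Hom_X']
  · simp [thB, sB, MvPolynomial.eval₂Hom_X']
    exact (Ideal.Quotient.eq_zero_iff_mem.mpr g2J).symm

theorem thB_J : ∀ a ∈ pJ, thB a = 0 := by
  have h1 : pJ ≤ RingHom.ker thB := by
    rw [pJ, Ideal.span_le]
    rintro g hg
    simp only [Set.mem_insert_iff, Set.mem_singleton_iff] at hg
    rcases hg with rfl | rfl <;>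
      simp [RingHom.mem_ker, thB, vy, vt, CiiM_sq, MvPolynomial.eval₂Hom_X']
  exact fun a ha => h1 ha

def thD : R4 →+* K :=
  MvPolynomial.eval₂Hom (algebraMap ℚ K) ![ii, 0, -ii, 0]

def sD : K →+* R4 ⧸ pP2 := sK g1P2

theorem secD : ∀ r, sD (thD r) = Ideal.Quotient.mk pP2 r := by
  intro r
  refine RingHom.congr_fun (mv_ext (sD.comp thD) (Ideal.Quotient.mk pP2) ?_) r
  intro i
  show sD (thD (X i)) = Ideal.Quotient.mk pP2 (X i)
  fin_cases i
  · simp [thD, sD, vx, sK_ii, MvPolynomial.eval₂Hom_X']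
  · simp [thD, sD, MvPolynomial.eval₂Hom_X']
    exact (Ideal.Quotient.eq_zero_iff_mem.mpr g3P2).symm
  · show sD (thD (X 2)) = Ideal.Quotient.mk pP2 (X 2)
    have h1 : thD (X 2) = -ii := by simp [thD, MvPolynomial.eval₂Hom_X']
    rw [h1, sD, map_neg, sK_ii]
    have h0 : Ideal.Quotient.mk pP2 vx + Ideal.Quotient.mk pP2 vy = 0 := by
      rw [← map_add]
      exact Ideal.Quotient.eq_zero_iff_mem.mpr g4P2
    have : (Ideal.Quotient.mk pP2 (X 2) : R4 ⧸ pP2) = Ideal.Quotient.mk pP2 vy := rfl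
    rw [this]
    linear_combination -h0
  · simp [thD, sD, MvPolynomial.eval₂Hom_X']
    exact (Ideal.Quotient.eq_zero_iff_mem.mpr g2P2).symm

theorem thD_P2 : ∀ a ∈ pP2, thD a = 0 := by
  have h1 : pP2 ≤ RingHom.ker thD := by
    rw [pP2, Ideal.span_le]
    rintro g hg
    simp only [Set.mem_insert_iff, Set.mem_singleton_iff] at hg
    rcases hg with rfl | rfl | rfl | rfl <;>
      simp [RingHom.mem_ker, thD, vx, vy, vz, vt, ii_sq, MvPolynomial.eval₂Hom_X']
  exact fun a ha => h1 ha

-- ### primality results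
instance : IsDomain (MvPolynomial (Fin 2) K) := inferInstance
instance : IsDomain (Polynomial K) := inferInstance

theorem pI_prime : pI.IsPrime := prime_of_sec thA thA_I sA secA
theorem pJ_prime : pJ.IsPrime := prime_of_sec thB thB_J sB secB
theorem pQ1_prime : pQ1.IsPrime := prime_of_sec thE thE_Q1 sE secE
theorem pQ2_prime : pQ2.IsPrime := prime_of_sec thF thF_Q2 sF secF
theorem pQ3_prime : pQ3.IsPrime := prime_of_sec thG thG_Q3 sG secG
theorem pP2_prime : pP2.IsPrime := prime_of_sec thD thD_P2 sD secD

-- ### annihilator computations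
theorem ann_eq {N p : Ideal R4} {w : R4} (h1 : ∀ r ∈ p, r * w ∈ N)
    (h2 : ∀ r : R4, r * w ∈ N → r ∈ p) :
    (Submodule.span R4 {(Ideal.Quotient.mk N w : R4 ⧸ N)}).annihilator = p := by
  ext r
  rw [Submodule.mem_annihilator_span_singleton]
  have hs : r • (Ideal.Quotient.mk N w : R4 ⧸ N) = Ideal.Quotient.mk N (r * w) := by
    rw [← smul_eq_mul, ← Ideal.Quotient.mk_eq_mk, ← Ideal.Quotient.mk_eq_mk,
      Submodule.Quotient.mk_smul]
  rw [hs, Ideal.Quotient.eq_zero_iff_mem]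
  exact ⟨h2 r, h1 r⟩

theorem memNN_left {a b : R4} (ha : a ∈ pI) (hb : b ∈ pJ) : a * b ∈ NN :=
  Ideal.mem_sup_left (Ideal.mul_mem_mul ha hb)

theorem memNN_right {a : R4} (h : vx - vy ∣ a) : a ∈ NN :=
  Ideal.mem_sup_right (Ideal.mem_span_singleton.mpr h)

theorem annQ1 :
    (Submodule.span R4 {(Ideal.Quotient.mk NN vt : R4 ⧸ NN)}).annihilator = pQ1 := by
  refine ann_eq ?_ ?_
  · have hle : pQ1 ≤ (NN).colon (Ideal.span {vt}) := by
      rw [pQ1, Ideal.span_le]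
      rintro g hg
      simp only [Set.mem_insert_iff, Set.mem_singleton_iff] at hg
      rcases hg with rfl | rfl | rfl
      · exact Ideal.mem_colon_span_singleton.mpr (memNN_left g1I g2J)
      · exact Ideal.mem_colon_span_singleton.mpr (memNN_left g2I g2J)
      · exact Ideal.mem_colon_span_singleton.mpr (memNN_right (dvd_mul_right _ _))
    intro r hr
    exact Ideal.mem_colon_span_singleton.mp (hle hr)
  · intro r hr
    have h0 := thE_NN _ hr
    rw [map_mul] at h0
    have ht : thE vt = Polynomial.X := by simp [thE, vt, MvPolynomial.eval₂Hom_X']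
    rw [ht, mul_eq_zero] at h0
    rcases h0 with h0 | h0
    · exact mem_of_sec thE sE secE h0
    · exact absurd h0 Polynomial.X_ne_zero

theorem annQ2 :
    (Submodule.span R4 {(Ideal.Quotient.mk NN vz : R4 ⧸ NN)}).annihilator = pQ2 := by
  refine ann_eq ?_ ?_
  · have hle : pQ2 ≤ (NN).colon (Ideal.span {vz}) := by
      rw [pQ2, Ideal.span_le]
      rintro g hg
      simp only [Set.mem_insert_iff, Set.mem_singleton_iff] at hg
      rcases hg with rfl | rfl | rfl
      · refine Ideal.mem_colon_span_singleton.mpr ?_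
        rw [mul_comm]
        exact memNN_left g2I g1J
      · refine Ideal.mem_colon_span_singleton.mpr ?_
        rw [mul_comm]
        exact memNN_left g2I g2J
      · exact Ideal.mem_colon_span_singleton.mpr (memNN_right (dvd_mul_right _ _))
    intro r hr
    exact Ideal.mem_colon_span_singleton.mp (hle hr)
  · intro r hr
    have h0 := thF_NN _ hr
    rw [map_mul] at h0
    have ht : thF vz = Polynomial.X := by simp [thF, vz, MvPolynomial.eval₂Hom_X']
    rw [ht, mul_eq_zero] at h0
    rcases h0 with h0 | h0
    · exact mem_of_sec thF sF secF h0
    · exact absurd h0 Polynomial.X_ne_zero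

theorem annQ3 :
    (Submodule.span R4
      {(Ideal.Quotient.mk NN (vx ^ 2 + 1) : R4 ⧸ NN)}).annihilator = pQ3 := by
  refine ann_eq ?_ ?_
  · have hle : pQ3 ≤ (NN).colon (Ideal.span {vx ^ 2 + 1}) := by
      rw [pQ3, Ideal.span_le]
      rintro g hg
      simp only [Set.mem_insert_iff, Set.mem_singleton_iff] at hg
      have key : ∀ u : R4, u ∈ pI → u * (vx ^ 2 + 1) ∈ NN := by
        intro u hu
        have heq : u * (vx ^ 2 + 1) =
            u * (vy ^ 2 + 1) + (u * (vx + vy)) * (vx - vy) := by ring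
        rw [heq]
        exact add_mem (memNN_left hu g1J) (memNN_right (dvd_mul_left _ _))
      rcases hg with rfl | rfl | rfl | rfl
      · exact Ideal.mem_colon_span_singleton.mpr (key _ g1I)
      · exact Ideal.mem_colon_span_singleton.mpr (key _ g2I)
      · refine Ideal.mem_colon_span_singleton.mpr ?_
        rw [mul_comm]
        exact memNN_left g1I g2J
      · exact Ideal.mem_colon_span_singleton.mpr (memNN_right (dvd_mul_right _ _))
    intro r hr
    exact Ideal.mem_colon_span_singleton.mp (hle hr)
  · intro r hr
    have h0 := thH_NN _ hr
    rw [map_mul] at h0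
    have ht : thH (vx ^ 2 + 1) = Polynomial.X ^ 2 + 1 := by simp [thH, vx]
    rw [ht, Ideal.mem_span_singleton, pow_two] at h0
    have hq0 : (Polynomial.X ^ 2 + 1 : Polynomial ℚ) ≠ 0 := by
      intro h
      have hd : (Polynomial.X ^ 2 + 1 : Polynomial ℚ).natDegree = 2 := by compute_degree!
      rw [h] at hd
      simp at hd
    have hdvd : (Polynomial.X ^ 2 + 1 : Polynomial ℚ) ∣ thH r :=
      (mul_dvd_mul_iff_right hq0).mp (by rwa [mul_comm (Polynomial.X ^ 2 + 1)] at h0)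
    have hG : thG r = 0 := by
      rw [thG_eq_mk_thH]
      exact AdjoinRoot.mk_eq_zero.mpr hdvd
    exact mem_of_sec thG sG secG hG

theorem annQ2' :
    (Submodule.span R4 {(Ideal.Quotient.mk a1 vz : R4 ⧸ a1)}).annihilator = pQ2 := by
  refine ann_eq ?_ ?_
  · have hle : pQ2 ≤ (a1).colon (Ideal.span {vz}) := by
      rw [pQ2, Ideal.span_le]
      rintro g hg
      simp only [Set.mem_insert_iff, Set.mem_singleton_iff] at hg
      rcases hg with rfl | rfl | rfl
      · refine Ideal.mem_colon_span_singleton.mpr (mem_span3 vz 0 (-(vz * (vx + vy))) (by ring))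
      · refine Ideal.mem_colon_span_singleton.mpr (mem_span3 0 1 0 (by ring))
      · refine Ideal.mem_colon_span_singleton.mpr (mem_span3 0 0 vz (by ring))
    intro r hr
    exact Ideal.mem_colon_span_singleton.mp (hle hr)
  · intro r hr
    have h0 := thF_a1 _ hr
    rw [map_mul] at h0
    have ht : thF vz = Polynomial.X := by simp [thF, vz, MvPolynomial.eval₂Hom_X']
    rw [ht, mul_eq_zero] at h0
    rcases h0 with h0 | h0
    · exact mem_of_sec thF sF secF h0
    · exact absurd h0 Polynomial.X_ne_zero

-- ### module assembly
theorem NN_le_a1 : NN ≤ a1 := by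
  rw [NN, sup_le_iff]
  constructor
  · rw [pI, pJ, Ideal.span_mul_span']
    rw [Ideal.span_le]
    rintro g hg
    simp only [Set.mul_singleton, Set.singleton_mul, Set.mem_union, Set.mem_image,
      Set.mem_insert_iff, Set.mem_singleton_iff, Set.mem_mul] at hg
    obtain ⟨u, hu, v, hv, rfl⟩ := hg
    rcases hu with rfl | rfl <;> rcases hv with rfl | rfl
    · exact mem_span3 (vy ^ 2 + 1) 0 0 (by ring)
    · exact mem_span3 vt 0 0 (by ring)
    · exact mem_span3 vz 0 (-(vz * (vx + vy))) (by ring)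
    · exact mem_span3 0 1 0 (by ring)
  · rw [Ideal.span_le]
    rintro g hg
    simp only [Set.mem_singleton_iff] at hg
    subst hg
    exact mem_span3 0 0 1 (by ring)

theorem a1_le_Q1 : a1 ≤ pQ1 := by
  rw [a1, Ideal.span_le]
  rintro g hg
  simp only [Set.mem_insert_iff, Set.mem_singleton_iff] at hg
  rcases hg with rfl | rfl | rfl
  · exact mem_span3 1 0 0 (by ring)
  · exact mem_span3 0 vt 0 (by ring)
  · exact mem_span3 0 0 1 (by ring)

theorem map1 : Submodule.map (Submodule.mkQ (NN : Submodule R4 R4)) (a1 : Submodule R4 R4) =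
    Submodule.span R4 {(Ideal.Quotient.mk NN (vx ^ 2 + 1) : R4 ⧸ NN)} := by
  have ha1 : (a1 : Submodule R4 R4) =
      Submodule.span R4 {vx ^ 2 + 1, vz * vt, vx - vy} := rfl
  rw [ha1, Submodule.map_span]
  apply le_antisymm
  · rw [Submodule.span_le]
    rintro g ⟨u, hu, rfl⟩
    simp only [Set.mem_insert_iff, Set.mem_singleton_iff] at hu
    rcases hu with rfl | rfl | rfl
    · exact Submodule.subset_span rfl
    · have : Submodule.mkQ (NN : Submodule R4 R4) (vz * vt) = 0 := by
        rw [Submodule.mkQ_apply, Submodule.Quotient.mk_eq_zero]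
        exact memNN_left g2I g2J
      rw [this]; exact zero_mem _
    · have : Submodule.mkQ (NN : Submodule R4 R4) (vx - vy) = 0 := by
        rw [Submodule.mkQ_apply, Submodule.Quotient.mk_eq_zero]
        exact memNN_right dvd_rfl
      rw [this]; exact zero_mem _
  · rw [Submodule.span_le]
    rintro g hg
    simp only [Set.mem_singleton_iff] at hg
    subst hg
    exact Submodule.subset_span ⟨vx ^ 2 + 1, by simp, rfl⟩

theorem map2 : Submodule.map (Submodule.mkQ (a1 : Submodule R4 R4)) (pQ1 : Submodule R4 R4) =
    Submodule.span R4 {(Ideal.Quotient.mk a1 vz : R4 ⧸ a1)} := by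
  have hq : (pQ1 : Submodule R4 R4) =
      Submodule.span R4 {vx ^ 2 + 1, vz, vx - vy} := rfl
  rw [hq, Submodule.map_span]
  apply le_antisymm
  · rw [Submodule.span_le]
    rintro g ⟨u, hu, rfl⟩
    simp only [Set.mem_insert_iff, Set.mem_singleton_iff] at hu
    rcases hu with rfl | rfl | rfl
    · have : Submodule.mkQ (a1 : Submodule R4 R4) (vx ^ 2 + 1) = 0 := by
        rw [Submodule.mkQ_apply, Submodule.Quotient.mk_eq_zero]
        exact Ideal.subset_span (by simp)
      rw [this]; exact zero_mem _
    · exact Submodule.subset_span rfl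
    · have : Submodule.mkQ (a1 : Submodule R4 R4) (vx - vy) = 0 := by
        rw [Submodule.mkQ_apply, Submodule.Quotient.mk_eq_zero]
        exact Ideal.subset_span (by simp)
      rw [this]; exact zero_mem _
  · rw [Submodule.span_le]
    rintro g hg
    simp only [Set.mem_singleton_iff] at hg
    subst hg
    exact Submodule.subset_span ⟨vz, by simp, rfl⟩

theorem ass_prime {p : Ideal R4} (hp : p.IsPrime) :
    associatedPrimes R4 (R4 ⧸ p) = {p} := by
  have h := associatedPrimes.eq_singleton_of_isPrimary (Ideal.IsPrime.isPrimary hp)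
  rwa [hp.radical] at h

theorem assMM : associatedPrimes R4 (R4 ⧸ NN) = {pQ1, pQ2, pQ3} := by
  apply subset_antisymm
  · intro p hp
    have h1 := ass_subset_union (Submodule.map (Submodule.mkQ (NN : Submodule R4 R4))
      (a1 : Submodule R4 R4)) hp
    rcases h1 with h1 | h1
    · rw [map1] at h1
      rw [ass_span_singleton, annQ3, ass_prime pQ3_prime] at h1
      rw [h1]
      simp
    · rw [LinearEquiv.AssociatedPrimes.eq
        (Submodule.quotientQuotientEquivQuotient (NN : Submodule R4 R4)
          (a1 : Submodule R4 R4) NN_le_a1)] at h1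
      have h2 := ass_subset_union (Submodule.map (Submodule.mkQ (a1 : Submodule R4 R4))
        (pQ1 : Submodule R4 R4)) h1
      rcases h2 with h2 | h2
      · rw [map2] at h2
        rw [ass_span_singleton, annQ2', ass_prime pQ2_prime] at h2
        rw [h2]
        simp
      · rw [LinearEquiv.AssociatedPrimes.eq
          (Submodule.quotientQuotientEquivQuotient (a1 : Submodule R4 R4)
            (pQ1 : Submodule R4 R4) a1_le_Q1)] at h2
        rw [ass_prime pQ1_prime] at h2
        rw [h2]
        simp
  · rintro p hp
    simp only [Set.mem_insert_iff, Set.mem_singleton_iff] at hp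
    rcases hp with rfl | rfl | rfl
    · exact ⟨pQ1_prime, Ideal.Quotient.mk NN vt,
        by rw [Submodule.bot_colon', annQ1, pQ1_prime.radical]⟩
    · exact ⟨pQ2_prime, Ideal.Quotient.mk NN vz,
        by rw [Submodule.bot_colon', annQ2, pQ2_prime.radical]⟩
    · exact ⟨pQ3_prime, Ideal.Quotient.mk NN (vx ^ 2 + 1),
        by rw [Submodule.bot_colon', annQ3, pQ3_prime.radical]⟩

-- ### minimal primes
def pP1 : Ideal R4 := Ideal.span {vx ^ 2 + 1, vt, vz, vx - vy}

theorem pP1_eq : pP1 = pQ3 := by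
  rw [pP1, pQ3]
  congr 1
  ext g
  simp only [Set.mem_insert_iff, Set.mem_singleton_iff]
  tauto

theorem pP1_prime : pP1.IsPrime := pP1_eq ▸ pQ3_prime

theorem hIJle1 : pI ⊔ pJ ≤ pP1 := by
  rw [sup_le_iff, pI, pJ, Ideal.span_le, Ideal.span_le]
  constructor
  · rintro g hg
    rcases hg with rfl | rfl
    · exact mem_span4 1 0 0 0 (by ring)
    · exact mem_span4 0 0 1 0 (by ring)
  · rintro g hg
    rcases hg with rfl | rfl
    · exact mem_span4 1 0 0 (-(vx + vy)) (by ring)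
    · exact mem_span4 0 1 0 0 (by ring)

theorem hIJle2 : pI ⊔ pJ ≤ pP2 := by
  rw [sup_le_iff, pI, pJ, Ideal.span_le, Ideal.span_le]
  constructor
  · rintro g hg
    rcases hg with rfl | rfl
    · exact mem_span4 1 0 0 0 (by ring)
    · exact mem_span4 0 0 1 0 (by ring)
  · rintro g hg
    rcases hg with rfl | rfl
    · exact mem_span4 1 0 0 (-(vx - vy)) (by ring)
    · exact mem_span4 0 1 0 0 (by ring)

theorem hprod : (vx - vy) * (vx + vy) ∈ pI ⊔ pJ := by
  have h : (vx - vy) * (vx + vy) = (vx ^ 2 + 1) - (vy ^ 2 + 1) := by ring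
  rw [h]
  exact sub_mem (Ideal.mem_sup_left g1I) (Ideal.mem_sup_right g1J)

theorem two_unit : IsUnit (2 : R4) := by
  have h2 : (2 : R4) = MvPolynomial.C (2 : ℚ) := by
    rw [map_ofNat]
  rw [h2]
  exact (MvPolynomial.C : ℚ →+* R4).isUnit_map (isUnit_iff_ne_zero.mpr two_ne_zero)

theorem P1_le_of {q : Ideal R4} (hle : pI ⊔ pJ ≤ q) (h : vx - vy ∈ q) : pP1 ≤ q := by
  rw [pP1, Ideal.span_le]
  rintro g hg
  rcases hg with rfl | rfl | rfl | rfl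
  · exact hle (Ideal.mem_sup_left g1I)
  · exact hle (Ideal.mem_sup_right g2J)
  · exact hle (Ideal.mem_sup_left g2I)
  · exact h

theorem P2_le_of {q : Ideal R4} (hle : pI ⊔ pJ ≤ q) (h : vx + vy ∈ q) : pP2 ≤ q := by
  rw [pP2, Ideal.span_le]
  rintro g hg
  rcases hg with rfl | rfl | rfl | rfl
  · exact hle (Ideal.mem_sup_left g1I)
  · exact hle (Ideal.mem_sup_right g2J)
  · exact hle (Ideal.mem_sup_left g2I)
  · exact h

theorem not_sum_P1 : vx + vy ∉ pP1 := by
  intro h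
  have h2 : vx - vy ∈ pP1 := Ideal.subset_span (by simp)
  have hy2 : vy ^ 2 + 1 ∈ pP1 := hIJle1 (Ideal.mem_sup_right g1J)
  have h2y : (2 : R4) ∈ pP1 := by
    have := sub_mem (Ideal.mul_mem_left _ 2 hy2)
      (Ideal.mul_mem_left _ vy (sub_mem h h2))
    have heq : 2 * (vy ^ 2 + 1) - vy * ((vx + vy) - (vx - vy)) = 2 := by ring
    rwa [heq] at this
  exact pP1_prime.ne_top (Ideal.eq_top_of_isUnit_mem _ h2y two_unit)

theorem not_diff_P2 : vx - vy ∉ pP2 := by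
  intro h
  have h2 : vx + vy ∈ pP2 := g4P2
  have hx2 : vx ^ 2 + 1 ∈ pP2 := g1P2
  have h2y : (2 : R4) ∈ pP2 := by
    have := sub_mem (Ideal.mul_mem_left _ 2 hx2)
      (Ideal.mul_mem_left _ vx (add_mem h h2))
    have heq : 2 * (vx ^ 2 + 1) - vx * ((vx - vy) + (vx + vy)) = 2 := by ring
    rwa [heq] at this
  exact pP2_prime.ne_top (Ideal.eq_top_of_isUnit_mem _ h2y two_unit)

theorem minP : (pI ⊔ pJ).minimalPrimes = {pP1, pP2} := by
  apply subset_antisymm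
  · rintro p ⟨⟨hp, hle⟩, hmin⟩
    have hm : (vx - vy) * (vx + vy) ∈ p := hle hprod
    rcases hp.mem_or_mem hm with h | h
    · left
      exact le_antisymm (hmin ⟨pP1_prime, hIJle1⟩ (P1_le_of hle h)) (P1_le_of hle h)
    · right
      exact le_antisymm (hmin ⟨pP2_prime, hIJle2⟩ (P2_le_of hle h)) (P2_le_of hle h)
  · rintro p hp
    rcases hp with rfl | rfl
    · refine ⟨⟨pP1_prime, hIJle1⟩, ?_⟩
      rintro q ⟨hq, hqle⟩ hqP1
      have hm : (vx - vy) * (vx + vy) ∈ q := hqle hprod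
      rcases hq.mem_or_mem hm with h | h
      · exact P1_le_of hqle h
      · exact absurd (hqP1 h) not_sum_P1
    · refine ⟨⟨pP2_prime, hIJle2⟩, ?_⟩
      rintro q ⟨hq, hqle⟩ hqP2
      have hm : (vx - vy) * (vx + vy) ∈ q := hqle hprod
      rcases hq.mem_or_mem hm with h | h
      · exact absurd (hqP2 h) not_diff_P2
      · exact P2_le_of hqle h

end ST18
end


open MvPolynomial

theorem stmt18 :
    let R := MvPolynomial (Fin 4) ℚ
    let x : R := X 0
    let z : R := X 1
    let y : R := X 2
    let t : R := X 3
    let I : Ideal R := Ideal.span {x ^ 2 + 1, z}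
    let J : Ideal R := Ideal.span {y ^ 2 + 1, t}
    I.IsPrime ∧ J.IsPrime ∧
    (I ⊔ J).minimalPrimes =
      {Ideal.span {x ^ 2 + 1, t, z, x - y}, Ideal.span {x ^ 2 + 1, t, z, x + y}} ∧
    associatedPrimes R (R ⧸ (I * J ⊔ Ideal.span {x - y})) =
      {Ideal.span {x ^ 2 + 1, z, x - y}, Ideal.span {y ^ 2 + 1, t, x - y},
        Ideal.span {x ^ 2 + 1, z, t, x - y}} := by
  intro R x z y t I J
  exact ⟨ST18.pI_prime, ST18.pJ_prime, ST18.minP, ST18.assMM⟩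
end
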